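/- arXiv:1801.07148 — 7 statements merged into one kernel-verified Lean document; each statement's English description precedes it below -/
import Mathlib

section
/- Let ν be a nonnegative finite symmetric Borel measure on ℝ^N, and let φ : ℝ → ℝ be nondecreasing and globally Lipschitz with Lipschitz constant L_φ satisfying the CFL condition L_φ · ν(ℝ^N) ≤ 1. If ψ, ψ̂ ∈ L^∞(ℝ^N) and ψ ≤ ψ̂ Lebesgue-a.e., then T^exp[ψ] ≤ T^exp[ψ̂] Lebesgue-a.e. -/
open MeasureTheory ENNReal
open scoped ENNReal NNReal

noncomputable section

/-- The zero-order Lévy operator `L^ν[ψ](x) := ∫ (ψ(x+z) − ψ(x)) dν(z)`. -/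
def Lnu {N : ℕ} (ν : Measure (EuclideanSpace ℝ (Fin N)))
    (ψ : EuclideanSpace ℝ (Fin N) → ℝ) (x : EuclideanSpace ℝ (Fin N)) : ℝ :=
  ∫ z, (ψ (x + z) - ψ x) ∂ν

/-- The explicit-step operator `T^exp[ψ](x) := ψ(x) + L^ν[φ∘ψ](x)`. -/
def Texp {N : ℕ} (ν : Measure (EuclideanSpace ℝ (Fin N))) (φ : ℝ → ℝ)
    (ψ : EuclideanSpace ℝ (Fin N) → ℝ) (x : EuclideanSpace ℝ (Fin N)) : ℝ :=
  ψ x + Lnu ν (fun y => φ (ψ y)) x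

lemma key_ae {N : ℕ} (ν : Measure (EuclideanSpace ℝ (Fin N))) [IsFiniteMeasure ν]
    {P : EuclideanSpace ℝ (Fin N) → Prop}
    (h : ∀ᵐ y ∂(volume : Measure (EuclideanSpace ℝ (Fin N))), P y) :
    ∀ᵐ x ∂(volume : Measure (EuclideanSpace ℝ (Fin N))), ∀ᵐ z ∂ν, P (x + z) := by
  obtain ⟨t, hsub, htm, ht0⟩ := exists_measurable_superset_of_null (ae_iff.mp h)
  set S : (EuclideanSpace ℝ (Fin N)) × (EuclideanSpace ℝ (Fin N)) → Prop := fun p => p.1 + p.2 ∈ t with hSdef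
  have hSm : MeasurableSet {p : (EuclideanSpace ℝ (Fin N)) × (EuclideanSpace ℝ (Fin N)) | S p} :=
    measurable_add htm
  have hswap : (Measure.prod (volume) ν) {p | S p} = (Measure.prod ν volume) (Prod.swap ⁻¹' {p | S p}) := by
    rw [← Measure.prod_swap, Measure.map_apply measurable_swap hSm]
  have h0 : (Measure.prod (volume : Measure (EuclideanSpace ℝ (Fin N))) ν) {p | S p} = 0 := by
    rw [hswap, Measure.prod_apply (measurable_swap hSm)]
    have : ∀ z, (volume : Measure (EuclideanSpace ℝ (Fin N))) (Prod.mk z ⁻¹' (Prod.swap ⁻¹' {p | S p})) = 0 := by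
      intro z
      have : (Prod.mk z ⁻¹' (Prod.swap ⁻¹' {p | S p})) = (fun x => x + z) ⁻¹' t := by
        ext x; simp [S, Set.mem_preimage]
      rw [this, measure_preimage_add_right]
      exact ht0
    have h2 := lintegral_congr (μ := ν) (f := fun x => (volume : Measure (EuclideanSpace ℝ (Fin N))) {a | S (a, x)}) (g := fun _ => 0) (fun z => this z)
    simpa using h2
  have := Measure.ae_ae_of_ae_prod (by rw [ae_iff]; simpa using h0 : ∀ᵐ p ∂(Measure.prod (volume : Measure (EuclideanSpace ℝ (Fin N))) ν), ¬ S p)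
  filter_upwards [this] with x hx
  filter_upwards [hx] with z hz
  by_contra hP
  exact hz (hsub hP)

theorem stmt2 {N : ℕ} (hN : 1 ≤ N)
    (ν : Measure (EuclideanSpace ℝ (Fin N))) [IsFiniteMeasure ν]
    (hsym : ν.map (fun z => -z) = ν)
    (φ : ℝ → ℝ) (hmono : Monotone φ)
    (L : ℝ≥0) (hLip : LipschitzWith L φ)
    (hCFL : (L : ℝ≥0∞) * ν Set.univ ≤ 1)
    (ψ ψ' : EuclideanSpace ℝ (Fin N) → ℝ)
    (hψ : MemLp ψ ∞ volume) (hψ' : MemLp ψ' ∞ volume)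
    (hle : ∀ᵐ x ∂(volume : Measure (EuclideanSpace ℝ (Fin N))), ψ x ≤ ψ' x) :
    ∀ᵐ x ∂(volume : Measure (EuclideanSpace ℝ (Fin N))),
      Texp ν φ ψ x ≤ Texp ν φ ψ' x := by
  classical
  obtain ⟨g, hgm, hg⟩ := hψ.1
  obtain ⟨g', hgm', hg'⟩ := hψ'.1
  set C : ℝ := (eLpNorm ψ ∞ volume).toReal + (eLpNorm ψ' ∞ volume).toReal with hC
  -- a.e. bound for ψ
  have hb : ∀ᵐ y ∂(volume : Measure (EuclideanSpace ℝ (Fin N))), |ψ y| ≤ C := by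
    have h1 := ae_le_eLpNormEssSup (f := ψ) (μ := (volume : Measure (EuclideanSpace ℝ (Fin N))))
    filter_upwards [h1] with y hy
    have hfin : eLpNormEssSup ψ (volume : Measure (EuclideanSpace ℝ (Fin N))) ≠ ∞ := by
      have := hψ.2
      rw [eLpNorm_exponent_top] at this
      exact this.ne
    have : (‖ψ y‖₊ : ℝ≥0∞).toReal ≤ (eLpNormEssSup ψ (volume : Measure (EuclideanSpace ℝ (Fin N)))).toReal :=
      ENNReal.toReal_mono hfin hy
    simp only [coe_toReal, coe_nnnorm, Real.norm_eq_abs] at this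
    have h2 : (eLpNormEssSup ψ' (volume : Measure (EuclideanSpace ℝ (Fin N)))).toReal ≥ 0 := ENNReal.toReal_nonneg
    simp only [hC, eLpNorm_exponent_top]
    linarith
  have hb' : ∀ᵐ y ∂(volume : Measure (EuclideanSpace ℝ (Fin N))), |ψ' y| ≤ C := by
    have h1 := ae_le_eLpNormEssSup (f := ψ') (μ := (volume : Measure (EuclideanSpace ℝ (Fin N))))
    filter_upwards [h1] with y hy
    have hfin : eLpNormEssSup ψ' (volume : Measure (EuclideanSpace ℝ (Fin N))) ≠ ∞ := by
      have := hψ'.2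
      rw [eLpNorm_exponent_top] at this
      exact this.ne
    have : (‖ψ' y‖₊ : ℝ≥0∞).toReal ≤ (eLpNormEssSup ψ' (volume : Measure (EuclideanSpace ℝ (Fin N)))).toReal :=
      ENNReal.toReal_mono hfin hy
    simp only [coe_toReal, coe_nnnorm, Real.norm_eq_abs] at this
    have h2 : (eLpNormEssSup ψ (volume : Measure (EuclideanSpace ℝ (Fin N)))).toReal ≥ 0 := ENNReal.toReal_nonneg
    simp only [hC, eLpNorm_exponent_top]
    linarith
  set Q : EuclideanSpace ℝ (Fin N) → Prop :=
    fun y => ψ y ≤ ψ' y ∧ ψ y = g y ∧ ψ' y = g' y ∧ |ψ y| ≤ C ∧ |ψ' y| ≤ C with hQ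
  have hQae : ∀ᵐ y ∂(volume : Measure (EuclideanSpace ℝ (Fin N))), Q y := by
    filter_upwards [hle, hg, hg', hb, hb'] with y h1 h2 h3 h4 h5
    exact ⟨h1, h2, h3, h4, h5⟩
  have hkey := key_ae ν hQae
  -- CFL in reals
  set m : ℝ := (ν Set.univ).toReal with hm
  have hm0 : 0 ≤ m := ENNReal.toReal_nonneg
  have hmL : (L : ℝ) * m ≤ 1 := by
    have h1 : ((L : ℝ≥0∞) * ν Set.univ).toReal ≤ (1 : ℝ≥0∞).toReal :=
      ENNReal.toReal_mono one_ne_top hCFL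
    rwa [ENNReal.toReal_mul, ENNReal.toReal_one, ENNReal.coe_toReal] at h1
  filter_upwards [hQae, hkey] with x hQx hQz
  -- integrability
  have hK : ∀ (f : EuclideanSpace ℝ (Fin N) → ℝ) (h : ℝ → ℝ),
      StronglyMeasurable h → (∀ᵐ z ∂ν, f (x + z) = h (f (x + z)) ∧ True) → True := fun _ _ _ _ => trivial
  have hmeas : AEStronglyMeasurable (fun z => φ (ψ (x + z))) ν := by
    refine AEStronglyMeasurable.congr (f := fun z => φ (g (x + z))) ?_ ?_
    · exact ((hLip.continuous.comp_stronglyMeasurable hgm).comp_measurable (measurable_const_add x)).aestronglyMeasurable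
    · filter_upwards [hQz] with z hz
      rw [hz.2.1]
  have hmeas' : AEStronglyMeasurable (fun z => φ (ψ' (x + z))) ν := by
    refine AEStronglyMeasurable.congr (f := fun z => φ (g' (x + z))) ?_ ?_
    · exact ((hLip.continuous.comp_stronglyMeasurable hgm').comp_measurable (measurable_const_add x)).aestronglyMeasurable
    · filter_upwards [hQz] with z hz
      rw [hz.2.2.1]
  have hbnd : ∀ a b : ℝ, |a| ≤ C → |b| ≤ C → ‖φ a - φ b‖ ≤ (L : ℝ) * (2 * C) := by
    intro a b ha hb
    have := hLip.dist_le_mul a b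
    rw [Real.dist_eq, Real.dist_eq] at this
    have habs : |a - b| ≤ 2 * C := by
      have h1 : |a - b| ≤ |a| + |b| := abs_sub a b
      linarith
    calc ‖φ a - φ b‖ = |φ a - φ b| := rfl
      _ ≤ (L : ℝ) * |a - b| := this
      _ ≤ (L : ℝ) * (2 * C) := by
          exact mul_le_mul_of_nonneg_left habs L.coe_nonneg
  have hint : Integrable (fun z => φ (ψ (x + z)) - φ (ψ x)) ν := by
    refine Integrable.mono' (integrable_const ((L : ℝ) * (2 * C))) (hmeas.sub aestronglyMeasurable_const) ?_
    filter_upwards [hQz] with z hz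
    exact hbnd _ _ hz.2.2.2.1 hQx.2.2.2.1
  have hint' : Integrable (fun z => φ (ψ' (x + z)) - φ (ψ' x)) ν := by
    refine Integrable.mono' (integrable_const ((L : ℝ) * (2 * C))) (hmeas'.sub aestronglyMeasurable_const) ?_
    filter_upwards [hQz] with z hz
    exact hbnd _ _ hz.2.2.2.2 hQx.2.2.2.2
  have hintA : Integrable (fun z => φ (ψ (x + z))) ν := by
    have h := hint.add (integrable_const (φ (ψ x)))
    refine h.congr ?_
    filter_upwards with z
    simp
  have hintA' : Integrable (fun z => φ (ψ' (x + z))) ν := by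
    have h := hint'.add (integrable_const (φ (ψ' x)))
    refine h.congr ?_
    filter_upwards with z
    simp
  -- rewrite Texp
  have hsplit : ∀ (f : EuclideanSpace ℝ (Fin N) → ℝ), Integrable (fun z => φ (f (x + z))) ν →
      Texp ν φ f x = (f x - m * φ (f x)) + ∫ z, φ (f (x + z)) ∂ν := by
    intro f hintf
    unfold Texp Lnu
    rw [integral_sub hintf (integrable_const _), integral_const]
    simp [hm, smul_eq_mul, Measure.real]
    ring
  rw [hsplit ψ hintA, hsplit ψ' hintA']
  have hpt : ψ x - m * φ (ψ x) ≤ ψ' x - m * φ (ψ' x) := by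
    have hle1 : ψ x ≤ ψ' x := hQx.1
    have h1 : φ (ψ' x) - φ (ψ x) ≤ (L : ℝ) * (ψ' x - ψ x) := by
      have hd := hLip.dist_le_mul (ψ' x) (ψ x)
      rw [Real.dist_eq, Real.dist_eq] at hd
      have h2 : φ (ψ x) ≤ φ (ψ' x) := hmono hle1
      have h3 : |φ (ψ' x) - φ (ψ x)| = φ (ψ' x) - φ (ψ x) := abs_of_nonneg (by linarith)
      have h4 : |ψ' x - ψ x| = ψ' x - ψ x := abs_of_nonneg (by linarith)
      rw [h3, h4] at hd
      exact hd
    nlinarith [mul_le_mul_of_nonneg_left h1 hm0, mul_nonneg (mul_nonneg L.coe_nonneg hm0) (sub_nonneg.mpr hle1)]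
  have hintle : ∫ z, φ (ψ (x + z)) ∂ν ≤ ∫ z, φ (ψ' (x + z)) ∂ν := by
    refine integral_mono_ae hintA hintA' ?_
    filter_upwards [hQz] with z hz
    exact hmono hz.1
  linarith
end
end

section
/- Let ν be a nonnegative finite symmetric Borel measure on ℝ^N, and let φ : ℝ → ℝ be nondecreasing and globally Lipschitz with Lipschitz constant L_φ satisfying L_φ · ν(ℝ^N) ≤ 1. If ψ, ψ̂ ∈ L^∞(ℝ^N) and (ψ − ψ̂)^+ ∈ L^1(ℝ^N), then ∫_{ℝ^N} (T^exp[ψ](x) − T^exp[ψ̂](x))^+ dx ≤ ∫_{ℝ^N} (ψ(x) − ψ̂(x))^+ dx, where a^+ := max(a, 0). -/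
open MeasureTheory ENNReal
open scoped ENNReal NNReal

noncomputable section

/-- key pointwise estimate for monotone Lipschitz functions -/
lemma phi_key {φ : ℝ → ℝ} (hmono : Monotone φ) {L : ℝ≥0} (hLip : LipschitzWith L φ)
    (u v : ℝ) : max (φ u - φ v) 0 ≤ (L : ℝ) * max (u - v) 0 := by
  rcases le_total v u with h | h
  · have h1 : φ v ≤ φ u := hmono h
    have h2 : φ u - φ v ≤ (L : ℝ) * (u - v) := by
      have hd := hLip.dist_le_mul u v
      rw [Real.dist_eq, Real.dist_eq] at hd
      calc φ u - φ v ≤ |φ u - φ v| := le_abs_self _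
        _ ≤ (L : ℝ) * |u - v| := hd
        _ = (L : ℝ) * (u - v) := by rw [abs_of_nonneg (by linarith)]
    rw [max_eq_left (by linarith), max_eq_left (by linarith)]
    exact h2
  · have h1 : φ u ≤ φ v := hmono h
    rw [max_eq_right (by linarith)]
    positivity

lemma integrable_of_bound {α : Type*} [MeasurableSpace α] (ν : Measure α) [IsFiniteMeasure ν]
    {h : α → ℝ} (hm : Measurable h) {M : ℝ} (hb : ∀ x, |h x| ≤ M) : Integrable h ν :=
  (integrable_const M).mono' hm.aestronglyMeasurable
    (Filter.Eventually.of_forall fun x => by simpa [Real.norm_eq_abs] using hb x)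

/-- The main estimate, for everywhere-bounded measurable representatives. -/
lemma aux_main {N : ℕ} (ν : Measure (EuclideanSpace ℝ (Fin N))) [IsFiniteMeasure ν]
    (φ : ℝ → ℝ) (hmono : Monotone φ) (L : ℝ≥0) (hLip : LipschitzWith L φ)
    (hCFL : (L : ℝ≥0∞) * ν Set.univ ≤ 1)
    (g g' : EuclideanSpace ℝ (Fin N) → ℝ) (hg : Measurable g) (hg' : Measurable g')
    {C : ℝ} (hb : ∀ x, |g x| ≤ C) (hb' : ∀ x, |g' x| ≤ C)
    (hpos : Integrable (fun x => max (g x - g' x) 0) volume) :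
    ∫⁻ x, ENNReal.ofReal (max (Texp ν φ g x - Texp ν φ g' x) 0) ∂volume ≤
      ∫⁻ x, ENNReal.ofReal (max (g x - g' x) 0) ∂volume := by
  set m : ℝ := (ν Set.univ).toReal with hm_def
  have hm0 : 0 ≤ m := ENNReal.toReal_nonneg
  have hmL : (L : ℝ) * m ≤ 1 := by
    have := ENNReal.toReal_mono (by norm_num) hCFL
    rwa [ENNReal.toReal_mul, ENNReal.coe_toReal, ENNReal.toReal_one] at this
  set a : EuclideanSpace ℝ (Fin N) → ℝ := fun x => g x - g' x with ha_def
  set d : EuclideanSpace ℝ (Fin N) → ℝ := fun x => φ (g x) - φ (g' x) with hd_def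
  set e : EuclideanSpace ℝ (Fin N) → ℝ := fun x => max (d x) 0 with he_def
  set ap : EuclideanSpace ℝ (Fin N) → ℝ := fun x => max (a x) 0 with hap_def
  have hφc : Continuous φ := hLip.continuous
  have hmeas_d : Measurable d := (hφc.measurable.comp hg).sub (hφc.measurable.comp hg')
  have hmeas_a : Measurable a := hg.sub hg'
  have hmeas_e : Measurable e := hmeas_d.max measurable_const
  have hmeas_ap : Measurable ap := hmeas_a.max measurable_const
  -- bounds
  have hd_bd : ∀ x, |d x| ≤ (L : ℝ) * (2 * C) := by
    intro x
    have := hLip.dist_le_mul (g x) (g' x)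
    rw [Real.dist_eq, Real.dist_eq] at this
    have h2 : |g x - g' x| ≤ 2 * C := by
      have := abs_sub (g x) (g' x)
      have := hb x; have := hb' x
      have habs : |g x - g' x| ≤ |g x| + |g' x| := abs_sub _ _
      linarith
    calc |d x| ≤ (L : ℝ) * |g x - g' x| := this
      _ ≤ (L : ℝ) * (2 * C) := by
        exact mul_le_mul_of_nonneg_left h2 L.coe_nonneg
  have he_bd : ∀ x, |e x| ≤ (L : ℝ) * (2 * C) := fun x => by
    have h1 := hd_bd x
    have : 0 ≤ (L : ℝ) * (2 * C) := le_trans (abs_nonneg _) h1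
    rw [he_def]; simp only
    rw [abs_le] at h1 ⊢
    constructor
    · exact le_trans (by linarith) (le_max_right _ _)
    · exact max_le h1.2 this
  -- key pointwise estimates
  have he_le : ∀ x, e x ≤ (L : ℝ) * ap x := fun x => phi_key hmono hLip (g x) (g' x)
  have he_neg : ∀ x, max (-(d x)) 0 ≤ (L : ℝ) * max (-(a x)) 0 := by
    intro x
    have := phi_key hmono hLip (g' x) (g x)
    simpa [hd_def, ha_def, neg_sub] using this
  -- integrability of shifted functions w.r.t. ν
  have hi_φg : ∀ x, Integrable (fun z => φ (g (x + z))) ν := fun x =>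
    integrable_of_bound ν (hφc.measurable.comp (hg.comp (measurable_const_add x)))
      (M := |φ 0| + (L : ℝ) * C) (fun z => by
        have := hLip.dist_le_mul (g (x + z)) 0
        rw [Real.dist_eq, Real.dist_eq, sub_zero] at this
        have h2 : |g (x + z)| ≤ C := hb _
        have h3 : |φ (g (x + z))| ≤ |φ 0| + (L : ℝ) * |g (x + z)| := by
          have := abs_sub_abs_le_abs_sub (φ (g (x + z))) (φ 0)
          linarith
        have h4 : (L : ℝ) * |g (x + z)| ≤ (L : ℝ) * C :=
          mul_le_mul_of_nonneg_left h2 L.coe_nonneg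
        linarith)
  have hi_φg' : ∀ x, Integrable (fun z => φ (g' (x + z))) ν := fun x =>
    integrable_of_bound ν (hφc.measurable.comp (hg'.comp (measurable_const_add x)))
      (M := |φ 0| + (L : ℝ) * C) (fun z => by
        have := hLip.dist_le_mul (g' (x + z)) 0
        rw [Real.dist_eq, Real.dist_eq, sub_zero] at this
        have h2 : |g' (x + z)| ≤ C := hb' _
        have h3 : |φ (g' (x + z))| ≤ |φ 0| + (L : ℝ) * |g' (x + z)| := by
          have := abs_sub_abs_le_abs_sub (φ (g' (x + z))) (φ 0)
          linarith
        have h4 : (L : ℝ) * |g' (x + z)| ≤ (L : ℝ) * C :=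
          mul_le_mul_of_nonneg_left h2 L.coe_nonneg
        linarith)
  have hi_d : ∀ x, Integrable (fun z => d (x + z)) ν := fun x => (hi_φg x).sub (hi_φg' x)
  have hi_e : ∀ x, Integrable (fun z => e (x + z)) ν :=
    fun x => integrable_of_bound ν (hmeas_e.comp (measurable_const_add x))
      (fun z => he_bd _)
  -- the Texp difference formula
  have hT : ∀ x, Texp ν φ g x - Texp ν φ g' x = a x + ∫ z, d (x + z) ∂ν - m * d x := by
    intro x
    have h1 : Lnu ν (fun y => φ (g y)) x = (∫ z, φ (g (x + z)) ∂ν) - m * φ (g x) := by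
      rw [Lnu, integral_sub (hi_φg x) (integrable_const _), integral_const, smul_eq_mul]; rfl
    have h2 : Lnu ν (fun y => φ (g' y)) x = (∫ z, φ (g' (x + z)) ∂ν) - m * φ (g' x) := by
      rw [Lnu, integral_sub (hi_φg' x) (integrable_const _), integral_const, smul_eq_mul]; rfl
    have h3 : ∫ z, d (x + z) ∂ν = (∫ z, φ (g (x + z)) ∂ν) - ∫ z, φ (g' (x + z)) ∂ν := by
      rw [hd_def]; exact integral_sub (hi_φg x) (hi_φg' x)
    rw [Texp, Texp, h1, h2, h3, ha_def, hd_def]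
    ring
  -- pointwise bound by F
  have hF_le : ∀ x, Texp ν φ g x - Texp ν φ g' x ≤
      ap x - m * e x + ∫ z, e (x + z) ∂ν := by
    intro x
    rw [hT x]
    have h1 : ∫ z, d (x + z) ∂ν ≤ ∫ z, e (x + z) ∂ν :=
      integral_mono (hi_d x) (hi_e x) (fun z => le_max_left _ _)
    have h2 : a x - m * d x ≤ ap x - m * e x := by
      have hid1 : max (-(a x)) 0 = ap x - a x := by
        rcases le_total (a x) 0 with h | h
        · rw [max_eq_left (by linarith), hap_def]; simp only
          rw [max_eq_right h]; ring
        · rw [max_eq_right (by linarith), hap_def]; simp only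
          rw [max_eq_left h]; ring
      have hid2 : max (-(d x)) 0 = e x - d x := by
        rcases le_total (d x) 0 with h | h
        · rw [max_eq_left (by linarith), he_def]; simp only
          rw [max_eq_right h]; ring
        · rw [max_eq_right (by linarith), he_def]; simp only
          rw [max_eq_left h]; ring
      have key : m * (e x - d x) ≤ ap x - a x := by
        rw [← hid1, ← hid2]
        calc m * max (-(d x)) 0 ≤ m * ((L : ℝ) * max (-(a x)) 0) :=
              mul_le_mul_of_nonneg_left (he_neg x) hm0
          _ = ((L : ℝ) * m) * max (-(a x)) 0 := by ring
          _ ≤ 1 * max (-(a x)) 0 :=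
              mul_le_mul_of_nonneg_right hmL (le_max_right _ _)
          _ = max (-(a x)) 0 := one_mul _
      linarith
    linarith
  have hF_nonneg : ∀ x, 0 ≤ ap x - m * e x + ∫ z, e (x + z) ∂ν := by
    intro x
    have h1 : m * e x ≤ ap x := by
      calc m * e x ≤ m * ((L : ℝ) * ap x) :=
            mul_le_mul_of_nonneg_left (he_le x) hm0
        _ = ((L : ℝ) * m) * ap x := by ring
        _ ≤ 1 * ap x := mul_le_mul_of_nonneg_right hmL (le_max_right _ _)
        _ = ap x := one_mul _
    have h2 : 0 ≤ ∫ z, e (x + z) ∂ν :=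
      integral_nonneg (fun z => le_max_right _ _)
    linarith
  have hme_le_ap : ∀ x, m * e x ≤ ap x := by
    intro x
    calc m * e x ≤ m * ((L : ℝ) * ap x) := mul_le_mul_of_nonneg_left (he_le x) hm0
      _ = ((L : ℝ) * m) * ap x := by ring
      _ ≤ 1 * ap x := mul_le_mul_of_nonneg_right hmL (le_max_right _ _)
      _ = ap x := one_mul _
  -- abbreviations for lintegrals
  set A : ℝ≥0∞ := ∫⁻ x, ENNReal.ofReal (ap x) ∂volume with hA_def
  set Ee : ℝ≥0∞ := ∫⁻ x, ENNReal.ofReal (e x) ∂volume with hEe_def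
  have hA_lt : A < ⊤ := hpos.lintegral_lt_top
  have hEe_le : Ee ≤ (L : ℝ≥0∞) * A := by
    rw [hEe_def, hA_def]
    calc ∫⁻ x, ENNReal.ofReal (e x) ∂volume
        ≤ ∫⁻ x, ENNReal.ofReal ((L : ℝ) * ap x) ∂volume :=
          lintegral_mono fun x => ENNReal.ofReal_le_ofReal (he_le x)
      _ = ∫⁻ x, (L : ℝ≥0∞) * ENNReal.ofReal (ap x) ∂volume := by
          congr 1; ext x
          rw [ENNReal.ofReal_mul L.coe_nonneg, ENNReal.ofReal_coe_nnreal]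
      _ = (L : ℝ≥0∞) * ∫⁻ x, ENNReal.ofReal (ap x) ∂volume :=
          lintegral_const_mul _ hmeas_ap.ennreal_ofReal
  have hC_le_A : ν Set.univ * Ee ≤ A := by
    calc ν Set.univ * Ee ≤ ν Set.univ * ((L : ℝ≥0∞) * A) :=
          mul_le_mul_right hEe_le _
      _ = ((L : ℝ≥0∞) * ν Set.univ) * A := by ring
      _ ≤ 1 * A := mul_le_mul_left hCFL _
      _ = A := one_mul _
  have hC_ne_top : ν Set.univ * Ee ≠ ⊤ := (lt_of_le_of_lt hC_le_A hA_lt).ne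
  -- step 1 : bound by F
  have step1 : ∫⁻ x, ENNReal.ofReal (max (Texp ν φ g x - Texp ν φ g' x) 0) ∂volume ≤
      ∫⁻ x, (ENNReal.ofReal (ap x - m * e x) +
        ENNReal.ofReal (∫ z, e (x + z) ∂ν)) ∂volume := by
    apply lintegral_mono
    intro x
    have h1 : max (Texp ν φ g x - Texp ν φ g' x) 0 ≤
        ap x - m * e x + ∫ z, e (x + z) ∂ν :=
      max_le (hF_le x) (hF_nonneg x)
    calc ENNReal.ofReal (max (Texp ν φ g x - Texp ν φ g' x) 0)
        ≤ ENNReal.ofReal (ap x - m * e x + ∫ z, e (x + z) ∂ν) :=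
          ENNReal.ofReal_le_ofReal h1
      _ ≤ ENNReal.ofReal (ap x - m * e x) + ENNReal.ofReal (∫ z, e (x + z) ∂ν) :=
          ENNReal.ofReal_add_le
  -- split the integral
  have hmeas_sub : Measurable fun x => ENNReal.ofReal (ap x - m * e x) :=
    (hmeas_ap.sub (measurable_const.mul hmeas_e)).ennreal_ofReal
  have step2 : ∫⁻ x, (ENNReal.ofReal (ap x - m * e x) +
      ENNReal.ofReal (∫ z, e (x + z) ∂ν)) ∂volume =
      (∫⁻ x, ENNReal.ofReal (ap x - m * e x) ∂volume) +
      ∫⁻ x, ENNReal.ofReal (∫ z, e (x + z) ∂ν) ∂volume :=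
    lintegral_add_left hmeas_sub _
  -- first term
  have hterm1 : ∫⁻ x, ENNReal.ofReal (ap x - m * e x) ∂volume =
      A - ν Set.univ * Ee := by
    have heq : ∀ x, ENNReal.ofReal (ap x - m * e x) =
        ENNReal.ofReal (ap x) - ENNReal.ofReal (m * e x) := by
      intro x
      exact ENNReal.ofReal_sub _ (mul_nonneg hm0 (le_max_right _ _))
    have hmeq : ∀ x, ENNReal.ofReal (m * e x) = ν Set.univ * ENNReal.ofReal (e x) := by
      intro x
      rw [ENNReal.ofReal_mul hm0, hm_def, ENNReal.ofReal_toReal (measure_ne_top ν _)]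
    have hint_me : ∫⁻ x, ENNReal.ofReal (m * e x) ∂volume = ν Set.univ * Ee := by
      simp_rw [hmeq]
      exact lintegral_const_mul _ hmeas_e.ennreal_ofReal
    have hsub := lintegral_sub (μ := volume)
      ((measurable_const.mul hmeas_e).ennreal_ofReal)
      (by have h := hC_ne_top; rw [← hint_me] at h; exact h)
      (Filter.Eventually.of_forall fun x => ENNReal.ofReal_le_ofReal (hme_le_ap x))
    calc ∫⁻ x, ENNReal.ofReal (ap x - m * e x) ∂volume
        = ∫⁻ x, (ENNReal.ofReal (ap x) - ENNReal.ofReal (m * e x)) ∂volume := by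
          simp_rw [heq]
      _ = A - ∫⁻ x, ENNReal.ofReal (m * e x) ∂volume := hsub
      _ = A - ν Set.univ * Ee := by rw [hint_me]
  -- second term
  have hterm2 : ∫⁻ x, ENNReal.ofReal (∫ z, e (x + z) ∂ν) ∂volume =
      ν Set.univ * Ee := by
    have heq : ∀ x, ENNReal.ofReal (∫ z, e (x + z) ∂ν) =
        ∫⁻ z, ENNReal.ofReal (e (x + z)) ∂ν := fun x =>
      ofReal_integral_eq_lintegral_ofReal (hi_e x)
        (Filter.Eventually.of_forall fun z => le_max_right _ _)
    simp_rw [heq]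
    rw [lintegral_lintegral_swap]
    · have hinner : ∀ z, ∫⁻ x, ENNReal.ofReal (e (x + z)) ∂volume = Ee := fun z =>
        lintegral_add_right_eq_self (fun y => ENNReal.ofReal (e y)) z
      simp_rw [hinner]
      rw [lintegral_const, mul_comm]
    · exact ((hmeas_e.comp (measurable_fst.add measurable_snd)).ennreal_ofReal).aemeasurable
  calc ∫⁻ x, ENNReal.ofReal (max (Texp ν φ g x - Texp ν φ g' x) 0) ∂volume
      ≤ (∫⁻ x, ENNReal.ofReal (ap x - m * e x) ∂volume) +
        ∫⁻ x, ENNReal.ofReal (∫ z, e (x + z) ∂ν) ∂volume := step1.trans step2.le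
    _ = (A - ν Set.univ * Ee) + ν Set.univ * Ee := by rw [hterm1, hterm2]
    _ = A := tsub_add_cancel_of_le hC_le_A

/-- Shifts of a Lebesgue-null set are ν-null for a.e. base point. -/
lemma ae_null_shift {N : ℕ} (ν : Measure (EuclideanSpace ℝ (Fin N))) [IsFiniteMeasure ν]
    (s : Set (EuclideanSpace ℝ (Fin N))) (hs : MeasurableSet s) (h0 : volume s = 0) :
    ∀ᵐ x ∂(volume : Measure (EuclideanSpace ℝ (Fin N))), ν {z | x + z ∈ s} = 0 := by
  have hmeasf : Measurable fun x : EuclideanSpace ℝ (Fin N) => ν {z | x + z ∈ s} := by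
    have hS : MeasurableSet {p : EuclideanSpace ℝ (Fin N) × EuclideanSpace ℝ (Fin N) |
        p.1 + p.2 ∈ s} := (measurable_fst.add measurable_snd) hs
    exact measurable_measure_prodMk_left (ν := ν) hS
  have hint : ∫⁻ x, ν {z | x + z ∈ s} ∂(volume : Measure (EuclideanSpace ℝ (Fin N))) = 0 := by
    have key : ∀ x : EuclideanSpace ℝ (Fin N), ν {z | x + z ∈ s} =
        ∫⁻ z, s.indicator (fun _ => (1 : ℝ≥0∞)) (x + z) ∂ν := by
      intro x
      have hpre : MeasurableSet ((fun z : EuclideanSpace ℝ (Fin N) => x + z) ⁻¹' s) :=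
        hs.preimage (measurable_const_add x)
      have : {z : EuclideanSpace ℝ (Fin N) | x + z ∈ s} =
          (fun z : EuclideanSpace ℝ (Fin N) => x + z) ⁻¹' s := rfl
      rw [this, ← lintegral_indicator_one hpre]
      refine lintegral_congr fun z => ?_
      by_cases hz : x + z ∈ s <;> simp [Set.indicator_apply, Set.mem_preimage, hz]
    simp_rw [key]
    rw [lintegral_lintegral_swap]
    · have hinner : ∀ z : EuclideanSpace ℝ (Fin N),
          ∫⁻ x, s.indicator (fun _ => (1 : ℝ≥0∞)) (x + z)
            ∂(volume : Measure (EuclideanSpace ℝ (Fin N))) = 0 := by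
        intro z
        rw [lintegral_add_right_eq_self (fun y => s.indicator (fun _ => (1 : ℝ≥0∞)) y) z]
        have : ∫⁻ x, s.indicator (fun _ => (1 : ℝ≥0∞)) x
            ∂(volume : Measure (EuclideanSpace ℝ (Fin N))) = volume s := by
          rw [← lintegral_indicator_one hs]
          rfl
        rw [this, h0]
      simp_rw [hinner]
      simp
    · have : Measurable fun p : EuclideanSpace ℝ (Fin N) × EuclideanSpace ℝ (Fin N) =>
          s.indicator (fun _ => (1 : ℝ≥0∞)) (p.1 + p.2) := by
        exact (measurable_indicator_const_iff 1).mpr hs |>.comp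
          (measurable_fst.add measurable_snd)
      exact this.aemeasurable
  exact (lintegral_eq_zero_iff hmeasf).mp hint

theorem stmt3 {N : ℕ} (hN : 1 ≤ N)
    (ν : Measure (EuclideanSpace ℝ (Fin N))) [IsFiniteMeasure ν]
    (hsym : ν.map (fun z => -z) = ν)
    (φ : ℝ → ℝ) (hmono : Monotone φ)
    (L : ℝ≥0) (hLip : LipschitzWith L φ)
    (hCFL : (L : ℝ≥0∞) * ν Set.univ ≤ 1)
    (ψ ψ' : EuclideanSpace ℝ (Fin N) → ℝ)
    (hψ : MemLp ψ ∞ volume) (hψ' : MemLp ψ' ∞ volume)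
    (hpos : Integrable (fun x => max (ψ x - ψ' x) 0) volume) :
    ∫⁻ x, ENNReal.ofReal (max (Texp ν φ ψ x - Texp ν φ ψ' x) 0) ∂volume ≤
      ∫⁻ x, ENNReal.ofReal (max (ψ x - ψ' x) 0) ∂volume := by
  classical
  -- bounded measurable representatives
  obtain ⟨g₀, hg₀sm, hg₀ae⟩ := hψ.aestronglyMeasurable
  obtain ⟨g₀', hg₀sm', hg₀ae'⟩ := hψ'.aestronglyMeasurable
  set C : ℝ := max (eLpNormEssSup ψ volume).toReal (eLpNormEssSup ψ' volume).toReal with hC_def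
  have hC0 : 0 ≤ C := le_trans ENNReal.toReal_nonneg (le_max_left _ _)
  have hbd : ∀ᵐ x ∂(volume : Measure (EuclideanSpace ℝ (Fin N))), |ψ x| ≤ C := by
    filter_upwards [ae_le_eLpNormEssSup (f := ψ) (μ := volume)] with x hx
    have hfin : eLpNormEssSup ψ volume < ⊤ := by
      have := hψ.2; rwa [eLpNorm_exponent_top] at this
    have : (‖ψ x‖₊ : ℝ≥0∞).toReal ≤ (eLpNormEssSup ψ volume).toReal :=
      ENNReal.toReal_mono hfin.ne hx
    simp only [ENNReal.coe_toReal, coe_nnnorm, Real.norm_eq_abs] at this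
    exact this.trans (le_max_left _ _)
  have hbd' : ∀ᵐ x ∂(volume : Measure (EuclideanSpace ℝ (Fin N))), |ψ' x| ≤ C := by
    filter_upwards [ae_le_eLpNormEssSup (f := ψ') (μ := volume)] with x hx
    have hfin : eLpNormEssSup ψ' volume < ⊤ := by
      have := hψ'.2; rwa [eLpNorm_exponent_top] at this
    have : (‖ψ' x‖₊ : ℝ≥0∞).toReal ≤ (eLpNormEssSup ψ' volume).toReal :=
      ENNReal.toReal_mono hfin.ne hx
    simp only [ENNReal.coe_toReal, coe_nnnorm, Real.norm_eq_abs] at this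
    exact this.trans (le_max_right _ _)
  set g : EuclideanSpace ℝ (Fin N) → ℝ := fun x => max (-C) (min C (g₀ x)) with hg_def
  set g' : EuclideanSpace ℝ (Fin N) → ℝ := fun x => max (-C) (min C (g₀' x)) with hg'_def
  have hgm : Measurable g :=
    measurable_const.max (measurable_const.min hg₀sm.measurable)
  have hgm' : Measurable g' :=
    measurable_const.max (measurable_const.min hg₀sm'.measurable)
  have hgb : ∀ x, |g x| ≤ C := by
    intro x
    rw [abs_le]
    refine ⟨le_max_left _ _, max_le (by linarith) (min_le_left _ _)⟩
  have hgb' : ∀ x, |g' x| ≤ C := by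
    intro x
    rw [abs_le]
    refine ⟨le_max_left _ _, max_le (by linarith) (min_le_left _ _)⟩
  have hgae : ψ =ᵐ[volume] g := by
    filter_upwards [hg₀ae, hbd] with x hx1 hx2
    rw [hg_def]
    simp only
    rw [← hx1, abs_le] at *
    rw [min_eq_right hx2.2, max_eq_right hx2.1]
  have hgae' : ψ' =ᵐ[volume] g' := by
    filter_upwards [hg₀ae', hbd'] with x hx1 hx2
    rw [hg'_def]
    simp only
    rw [← hx1, abs_le] at *
    rw [min_eq_right hx2.2, max_eq_right hx2.1]
  -- transfer RHS
  have hRHS : ∫⁻ x, ENNReal.ofReal (max (ψ x - ψ' x) 0) ∂volume =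
      ∫⁻ x, ENNReal.ofReal (max (g x - g' x) 0) ∂volume := by
    apply lintegral_congr_ae
    filter_upwards [hgae, hgae'] with x hx1 hx2
    rw [hx1, hx2]
  -- transfer integrability
  have hpos' : Integrable (fun x => max (g x - g' x) 0) volume := by
    apply hpos.congr
    filter_upwards [hgae, hgae'] with x hx1 hx2
    rw [hx1, hx2]
  -- the null set where representatives differ
  set s : Set (EuclideanSpace ℝ (Fin N)) :=
    MeasureTheory.toMeasurable volume ({x | ψ x ≠ g x} ∪ {x | ψ' x ≠ g' x}) with hs_def
  have hs_meas : MeasurableSet s := measurableSet_toMeasurable _ _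
  have hs_null : volume s = 0 := by
    rw [hs_def, measure_toMeasurable]
    exact measure_union_null (ae_iff.mp hgae) (ae_iff.mp hgae')
  have hshift := ae_null_shift ν s hs_meas hs_null
  -- transfer LHS
  have hLHS : ∫⁻ x, ENNReal.ofReal (max (Texp ν φ ψ x - Texp ν φ ψ' x) 0) ∂volume =
      ∫⁻ x, ENNReal.ofReal (max (Texp ν φ g x - Texp ν φ g' x) 0) ∂volume := by
    apply lintegral_congr_ae
    filter_upwards [hgae, hgae', hshift] with x hx1 hx2 hx3
    have hzae : ∀ᵐ z ∂ν, x + z ∉ s := by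
      rw [ae_iff]
      simpa using hx3
    have hT1 : Texp ν φ ψ x = Texp ν φ g x := by
      rw [Texp, Texp, hx1, Lnu, Lnu]
      congr 1
      apply integral_congr_ae
      filter_upwards [hzae] with z hz
      have h1 : ψ (x + z) = g (x + z) := by
        by_contra h
        exact hz (subset_toMeasurable _ _ (Or.inl h))
      rw [h1, hx1]
    have hT2 : Texp ν φ ψ' x = Texp ν φ g' x := by
      rw [Texp, Texp, hx2, Lnu, Lnu]
      congr 1
      apply integral_congr_ae
      filter_upwards [hzae] with z hz
      have h1 : ψ' (x + z) = g' (x + z) := by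
        by_contra h
        exact hz (subset_toMeasurable _ _ (Or.inr h))
      rw [h1, hx2]
    rw [hT1, hT2]
  rw [hLHS, hRHS]
  exact aux_main ν φ hmono L hLip hCFL g g' hgm hgm' hgb hgb' hpos'
end
end

section
/- Let ν be a nonnegative finite symmetric Borel measure on ℝ^N, and let φ : ℝ → ℝ be nondecreasing, globally Lipschitz with Lipschitz constant L_φ satisfying L_φ · ν(ℝ^N) ≤ 1, and φ(0) = 0. If ψ ∈ L^∞(ℝ^N), then ‖T^exp[ψ]‖_{L^∞(ℝ^N)} ≤ ‖ψ‖_{L^∞(ℝ^N)}. If in addition ψ ∈ L^1(ℝ^N), then ‖T^exp[ψ]‖_{L^1(ℝ^N)} ≤ ‖ψ‖_{L^1(ℝ^N)}. -/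
open MeasureTheory ENNReal
open scoped ENNReal NNReal

noncomputable section

lemma texp_congr {N : ℕ} (ν : Measure (EuclideanSpace ℝ (Fin N))) [IsFiniteMeasure ν]
    (φ : ℝ → ℝ) {f g : EuclideanSpace ℝ (Fin N) → ℝ} (hfg : f =ᵐ[volume] g) :
    Texp ν φ f =ᵐ[volume] Texp ν φ g := by
  obtain ⟨S, hSsub, hSm, hS0⟩ := exists_measurable_superset_of_null (ae_iff.mp hfg)
  have hprod : MeasurableSet {p : EuclideanSpace ℝ (Fin N) × EuclideanSpace ℝ (Fin N) |
      p.1 + p.2 ∈ S} := hSm.preimage measurable_add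
  have hmeas : Measurable fun x => ν {z | x + z ∈ S} := by
    have := measurable_measure_prodMk_left (ν := ν) hprod
    exact this
  have hint0 : ∫⁻ x, ν {z | x + z ∈ S} ∂(volume : Measure (EuclideanSpace ℝ (Fin N))) = 0 := by
    have h1 : ∀ x : EuclideanSpace ℝ (Fin N),
        ν {z | x + z ∈ S} = ∫⁻ z, S.indicator 1 (x + z) ∂ν := by
      intro x
      have : (fun z => S.indicator (1 : EuclideanSpace ℝ (Fin N) → ℝ≥0∞) (x + z))
          = fun z => ((fun z => x + z) ⁻¹' S).indicator 1 z := by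
        funext z
        by_cases h : x + z ∈ S <;>
          simp [Set.indicator, h, Set.mem_preimage]
      rw [this, lintegral_indicator_one (hSm.preimage (measurable_const_add x))]
      rfl
    simp_rw [h1]
    rw [lintegral_lintegral_swap]
    · have h2 : ∀ z : EuclideanSpace ℝ (Fin N),
          ∫⁻ x, S.indicator 1 (x + z) ∂volume = 0 := by
        intro z
        rw [lintegral_add_right_eq_self (fun y => S.indicator 1 y) z,
          lintegral_indicator_one hSm, hS0]
      simp_rw [h2, lintegral_zero]
    · exact (measurable_one.indicator hSm |>.comp measurable_add).aemeasurable
  have hzero : ∀ᵐ x ∂(volume : Measure (EuclideanSpace ℝ (Fin N))), ν {z | x + z ∈ S} = 0 := by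
    have h := (lintegral_eq_zero_iff hmeas).mp hint0
    filter_upwards [h] with x hx using hx
  filter_upwards [hzero, hfg] with x hx hfx
  have hae : ∀ᵐ z ∂ν, x + z ∉ S := by
    rw [ae_iff]
    simpa using hx
  have hae2 : ∀ᵐ z ∂ν, f (x + z) = g (x + z) := by
    filter_upwards [hae] with z hz
    by_contra h
    exact hz (hSsub h)
  unfold Texp Lnu
  rw [hfx]
  congr 1
  refine integral_congr_ae ?_
  filter_upwards [hae2] with z hz
  rw [hz, hfx]

theorem stmt4 {N : ℕ} (hN : 1 ≤ N)
    (ν : Measure (EuclideanSpace ℝ (Fin N))) [IsFiniteMeasure ν]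
    (hsym : ν.map (fun z => -z) = ν)
    (φ : ℝ → ℝ) (hmono : Monotone φ)
    (L : ℝ≥0) (hLip : LipschitzWith L φ)
    (hCFL : (L : ℝ≥0∞) * ν Set.univ ≤ 1)
    (hφ0 : φ 0 = 0)
    (ψ : EuclideanSpace ℝ (Fin N) → ℝ) (hψ : MemLp ψ ∞ volume) :
    eLpNorm (Texp ν φ ψ) ∞ volume ≤ eLpNorm ψ ∞ volume ∧
    (Integrable ψ volume →
      eLpNorm (Texp ν φ ψ) 1 volume ≤ eLpNorm ψ 1 volume) := by
  classical
  set M : ℝ := (eLpNorm ψ ∞ volume).toReal with hMdef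
  have hM0 : 0 ≤ M := ENNReal.toReal_nonneg
  -- a.e. bound on ψ
  have hψM : ∀ᵐ x ∂(volume : Measure (EuclideanSpace ℝ (Fin N))), |ψ x| ≤ M := by
    filter_upwards [ae_le_eLpNormEssSup (f := ψ) (μ := volume)] with x hx
    have h1 : (‖ψ x‖₊ : ℝ≥0∞) ≤ eLpNorm ψ ∞ volume := by
      rw [eLpNorm_exponent_top]; exact hx
    have h2 := ENNReal.toReal_mono hψ.2.ne h1
    rw [← hMdef] at h2
    simpa [Real.norm_eq_abs] using h2
  -- truncated measurable representative
  set g : (EuclideanSpace ℝ (Fin N)) → ℝ := fun x => max (-M) (min M (hψ.1.mk ψ x)) with hgdef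
  have hgm : Measurable g :=
    (measurable_const.max (measurable_const.min hψ.1.measurable_mk))
  have hgbd : ∀ x, |g x| ≤ M := by
    intro x
    rw [abs_le]
    constructor
    · exact le_max_left _ _
    · exact max_le (by linarith) (min_le_left _ _)
  have hgψ : g =ᵐ[volume] ψ := by
    filter_upwards [hψ.1.ae_eq_mk, hψM] with x hx hxM
    rw [hgdef]
    simp only
    rw [← hx]
    rw [abs_le] at hxM
    rw [min_eq_right hxM.2, max_eq_right hxM.1]
  have hTg : Texp ν φ ψ =ᵐ[volume] Texp ν φ g := texp_congr ν φ hgψ.symm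
  have heψg : ∀ p : ℝ≥0∞, eLpNorm ψ p volume = eLpNorm g p volume :=
    fun p => (eLpNorm_congr_ae hgψ).symm
  -- constants
  set c : ℝ := (ν Set.univ).toReal with hcdef
  have hc0 : 0 ≤ c := ENNReal.toReal_nonneg
  have hcL : c * (L : ℝ) ≤ 1 := by
    have h1 := ENNReal.toReal_mono (by simp) hCFL
    rw [ENNReal.toReal_mul] at h1
    simpa [mul_comm] using h1
  -- basic facts about φ
  have hφ_bd : ∀ r, |φ r| ≤ (L : ℝ) * |r| := by
    intro r
    have := hLip.dist_le_mul r 0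
    simpa [hφ0, Real.dist_eq] using this
  have hφ_incr : ∀ r s, r ≤ s → φ s - φ r ≤ (L : ℝ) * (s - r) := by
    intro r s hrs
    have := hLip.dist_le_mul s r
    rw [Real.dist_eq, Real.dist_eq] at this
    have h2 : |φ s - φ r| ≤ (L : ℝ) * (s - r) := by
      rw [show |s - r| = s - r from abs_of_nonneg (by linarith)] at this
      exact this
    exact le_trans (le_abs_self _) h2
  have hh_mono : ∀ r s, r ≤ s → r - c * φ r ≤ s - c * φ s := by
    intro r s hrs
    have h1 := hφ_incr r s hrs
    have h2 : c * (φ s - φ r) ≤ c * ((L : ℝ) * (s - r)) :=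
      mul_le_mul_of_nonneg_left h1 hc0
    nlinarith [mul_nonneg (mul_nonneg hc0 L.coe_nonneg) (sub_nonneg.mpr hrs)]
  have hφ_pos : ∀ r, 0 ≤ r → 0 ≤ φ r := fun r hr => hφ0 ▸ hmono hr
  have hφ_neg : ∀ r, r ≤ 0 → φ r ≤ 0 := fun r hr => hφ0 ▸ hmono hr
  have habs : ∀ r, |r - c * φ r| = |r| - c * |φ r| := by
    intro r
    rcases le_total 0 r with hr | hr
    · have h1 : 0 ≤ φ r := hφ_pos r hr
      have h2 : c * φ r ≤ r := by nlinarith [hφ_bd r, abs_of_nonneg hr, abs_of_nonneg h1]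
      rw [abs_of_nonneg (by linarith), abs_of_nonneg hr, abs_of_nonneg h1]
    · have h1 : φ r ≤ 0 := hφ_neg r hr
      have h2 : r ≤ c * φ r := by nlinarith [hφ_bd r, abs_of_nonpos hr, abs_of_nonpos h1]
      rw [abs_of_nonpos (by linarith), abs_of_nonpos hr, abs_of_nonpos h1]
      ring
  -- ν-integrability
  have hmz : ∀ x : (EuclideanSpace ℝ (Fin N)), Measurable fun z => φ (g (x + z)) := fun x =>
    hLip.continuous.measurable.comp (hgm.comp (measurable_const_add x))
  have hI1 : ∀ x : (EuclideanSpace ℝ (Fin N)), Integrable (fun z => φ (g (x + z))) ν := by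
    intro x
    refine (integrable_const ((L : ℝ) * M)).mono' (hmz x).aestronglyMeasurable ?_
    refine Filter.Eventually.of_forall fun z => ?_
    rw [Real.norm_eq_abs]
    calc |φ (g (x + z))| ≤ (L : ℝ) * |g (x + z)| := hφ_bd _
      _ ≤ (L : ℝ) * M := mul_le_mul_of_nonneg_left (hgbd _) L.coe_nonneg
  -- decomposition of Texp
  have hTdecomp : ∀ x : (EuclideanSpace ℝ (Fin N)),
      Texp ν φ g x = (g x - c * φ (g x)) + ∫ z, φ (g (x + z)) ∂ν := by
    intro x
    unfold Texp Lnu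
    rw [integral_sub (hI1 x) (integrable_const _), integral_const, measureReal_def]
    simp only [smul_eq_mul, ← hcdef]
    ring
  -- L^∞ bound pointwise
  have hTbd : ∀ x : (EuclideanSpace ℝ (Fin N)), |Texp ν φ g x| ≤ M := by
    intro x
    rw [hTdecomp x, abs_le]
    constructor
    · have h1 : -M - c * φ (-M) ≤ g x - c * φ (g x) :=
        hh_mono _ _ (by have := hgbd x; rw [abs_le] at this; exact this.1)
      have h2 : ∫ z, φ (-M) ∂ν ≤ ∫ z, φ (g (x + z)) ∂ν := by
        refine integral_mono (integrable_const _) (hI1 x) fun z => ?_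
        exact hmono (by have := hgbd (x + z); rw [abs_le] at this; exact this.1)
      rw [integral_const, measureReal_def] at h2
      simp only [smul_eq_mul, ← hcdef] at h2
      linarith
    · have h1 : g x - c * φ (g x) ≤ M - c * φ M :=
        hh_mono _ _ (by have := hgbd x; rw [abs_le] at this; exact this.2)
      have h2 : ∫ z, φ (g (x + z)) ∂ν ≤ ∫ z, φ M ∂ν := by
        refine integral_mono (hI1 x) (integrable_const _) fun z => ?_
        exact hmono (by have := hgbd (x + z); rw [abs_le] at this; exact this.2)
      rw [integral_const, measureReal_def] at h2
      simp only [smul_eq_mul, ← hcdef] at h2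
      linarith
  constructor
  · -- L^∞ part
    rw [eLpNorm_congr_ae hTg, eLpNorm_exponent_top]
    calc eLpNormEssSup (Texp ν φ g) volume ≤ ENNReal.ofReal M :=
          eLpNormEssSup_le_of_ae_bound
            (Filter.Eventually.of_forall fun x => by
              rw [Real.norm_eq_abs]; exact hTbd x)
      _ = eLpNorm ψ ∞ volume := ENNReal.ofReal_toReal hψ.2.ne
  · -- L^1 part
    intro hint
    have hgint : Integrable g volume := hint.congr hgψ.symm
    have hφgm : Measurable fun x => φ (g x) := hLip.continuous.measurable.comp hgm
    have hφg_int : Integrable (fun x => φ (g x)) volume := by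
      refine (hgint.norm.const_mul (L : ℝ)).mono' hφgm.aestronglyMeasurable ?_
      refine Filter.Eventually.of_forall fun x => ?_
      simp only [Real.norm_eq_abs]
      exact hφ_bd _
    set K : ℝ≥0∞ := ∫⁻ x, ENNReal.ofReal |φ (g x)| ∂(volume : Measure (EuclideanSpace ℝ (Fin N))) with hKdef
    have hKfin : K ≠ ∞ := by
      have h1 : K = ∫⁻ x, (‖φ (g x)‖₊ : ℝ≥0∞) ∂(volume : Measure (EuclideanSpace ℝ (Fin N))) := by
        refine lintegral_congr fun x => ?_
        rw [← enorm_eq_nnnorm, ← ofReal_norm, Real.norm_eq_abs]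
      rw [h1]
      exact hφg_int.2.ne
    have hsub : ∀ r : ℝ, c * |φ r| ≤ |r| := by
      intro r
      calc c * |φ r| ≤ c * ((L : ℝ) * |r|) := mul_le_mul_of_nonneg_left (hφ_bd _) hc0
        _ = (c * (L : ℝ)) * |r| := by ring
        _ ≤ 1 * |r| := mul_le_mul_of_nonneg_right hcL (abs_nonneg _)
        _ = |r| := one_mul _
    -- pointwise bound
    have hptwise : ∀ x : (EuclideanSpace ℝ (Fin N)), (‖Texp ν φ g x‖₊ : ℝ≥0∞) ≤
        (ENNReal.ofReal |g x| - ENNReal.ofReal (c * |φ (g x)|)) +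
          ENNReal.ofReal (∫ z, |φ (g (x + z))| ∂ν) := by
      intro x
      have hreal : |Texp ν φ g x| ≤
          (|g x| - c * |φ (g x)|) + ∫ z, |φ (g (x + z))| ∂ν := by
        rw [hTdecomp x]
        calc |(g x - c * φ (g x)) + ∫ z, φ (g (x + z)) ∂ν|
            ≤ |g x - c * φ (g x)| + |∫ z, φ (g (x + z)) ∂ν| := abs_add_le _ _
          _ ≤ (|g x| - c * |φ (g x)|) + ∫ z, |φ (g (x + z))| ∂ν := by
              refine add_le_add (le_of_eq (habs _)) ?_
              simpa [Real.norm_eq_abs] using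
                norm_integral_le_integral_norm (fun z => φ (g (x + z))) (μ := ν)
      have hsub_nonneg : c * |φ (g x)| ≤ |g x| := hsub (g x)
      rw [← enorm_eq_nnnorm, ← ofReal_norm, Real.norm_eq_abs]
      calc ENNReal.ofReal |Texp ν φ g x|
          ≤ ENNReal.ofReal ((|g x| - c * |φ (g x)|) + ∫ z, |φ (g (x + z))| ∂ν) :=
            ENNReal.ofReal_le_ofReal hreal
        _ = ENNReal.ofReal (|g x| - c * |φ (g x)|) +
              ENNReal.ofReal (∫ z, |φ (g (x + z))| ∂ν) := by
            rw [ENNReal.ofReal_add (by linarith)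
              (integral_nonneg fun z => abs_nonneg _)]
        _ = (ENNReal.ofReal |g x| - ENNReal.ofReal (c * |φ (g x)|)) +
              ENNReal.ofReal (∫ z, |φ (g (x + z))| ∂ν) := by
            rw [ENNReal.ofReal_sub _ (mul_nonneg hc0 (abs_nonneg _))]
    have hAm : Measurable fun x : (EuclideanSpace ℝ (Fin N)) => ENNReal.ofReal |g x| :=
      hgm.abs.ennreal_ofReal
    have hBm : Measurable fun x : (EuclideanSpace ℝ (Fin N)) =>
        ENNReal.ofReal (c * |φ (g x)|) := (hφgm.abs.const_mul c).ennreal_ofReal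
    have hBeq : ∫⁻ x, ENNReal.ofReal (c * |φ (g x)|) ∂(volume : Measure (EuclideanSpace ℝ (Fin N)))
        = ν Set.univ * K := by
      simp_rw [ENNReal.ofReal_mul hc0]
      rw [lintegral_const_mul _ hφgm.abs.ennreal_ofReal,
        ENNReal.ofReal_toReal (measure_ne_top ν _)]
    have hCeq : ∫⁻ x, ENNReal.ofReal (∫ z, |φ (g (x + z))| ∂ν)
          ∂(volume : Measure (EuclideanSpace ℝ (Fin N))) = ν Set.univ * K := by
      have h1 : ∀ x : (EuclideanSpace ℝ (Fin N)), ENNReal.ofReal (∫ z, |φ (g (x + z))| ∂ν)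
          = ∫⁻ z, ENNReal.ofReal |φ (g (x + z))| ∂ν := fun x =>
        ofReal_integral_eq_lintegral_ofReal (hI1 x).abs
          (Filter.Eventually.of_forall fun z => abs_nonneg _)
      simp_rw [h1]
      have hum : AEMeasurable (Function.uncurry fun (x z : EuclideanSpace ℝ (Fin N)) =>
          ENNReal.ofReal |φ (g (x + z))|)
          ((volume : Measure (EuclideanSpace ℝ (Fin N))).prod ν) := by
        apply Measurable.aemeasurable
        exact hφgm.abs.ennreal_ofReal.comp measurable_add
      rw [lintegral_lintegral_swap hum]
      have h2 : ∀ z : (EuclideanSpace ℝ (Fin N)),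
          ∫⁻ x, ENNReal.ofReal |φ (g (x + z))| ∂(volume : Measure (EuclideanSpace ℝ (Fin N))) = K :=
        fun z => lintegral_add_right_eq_self (fun y => ENNReal.ofReal |φ (g y)|) z
      simp_rw [h2]
      rw [lintegral_const, mul_comm]
    have hle : ν Set.univ * K ≤
        ∫⁻ x, ENNReal.ofReal |g x| ∂(volume : Measure (EuclideanSpace ℝ (Fin N))) := by
      rw [← hBeq]
      exact lintegral_mono fun x => ENNReal.ofReal_le_ofReal (hsub (g x))
    rw [eLpNorm_congr_ae hTg, heψg 1]
    simp only [eLpNorm_one_eq_lintegral_enorm]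
    calc ∫⁻ x, (‖Texp ν φ g x‖₊ : ℝ≥0∞) ∂(volume : Measure (EuclideanSpace ℝ (Fin N)))
        ≤ ∫⁻ x, ((ENNReal.ofReal |g x| - ENNReal.ofReal (c * |φ (g x)|)) +
            ENNReal.ofReal (∫ z, |φ (g (x + z))| ∂ν))
            ∂(volume : Measure (EuclideanSpace ℝ (Fin N))) :=
          lintegral_mono hptwise
      _ = (∫⁻ x, (ENNReal.ofReal |g x| - ENNReal.ofReal (c * |φ (g x)|))
              ∂(volume : Measure (EuclideanSpace ℝ (Fin N)))) +
            ∫⁻ x, ENNReal.ofReal (∫ z, |φ (g (x + z))| ∂ν)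
              ∂(volume : Measure (EuclideanSpace ℝ (Fin N))) :=
          lintegral_add_left (hAm.sub hBm) _
      _ = ((∫⁻ x, ENNReal.ofReal |g x| ∂(volume : Measure (EuclideanSpace ℝ (Fin N))))
            - ν Set.univ * K) + ν Set.univ * K := by
          rw [lintegral_sub hBm
            (by rw [hBeq]; exact ENNReal.mul_ne_top (measure_ne_top ν _) hKfin)
            (Filter.Eventually.of_forall fun x => ENNReal.ofReal_le_ofReal (hsub (g x))),
            hBeq, hCeq]
      _ = ∫⁻ x, ENNReal.ofReal |g x| ∂(volume : Measure (EuclideanSpace ℝ (Fin N))) :=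
          tsub_add_cancel_of_le hle
      _ = ∫⁻ x, (‖g x‖₊ : ℝ≥0∞) ∂(volume : Measure (EuclideanSpace ℝ (Fin N))) := by
          refine lintegral_congr fun x => ?_
          rw [← enorm_eq_nnnorm, ← ofReal_norm, Real.norm_eq_abs]
end
end

section
/- Let ν be a nonnegative finite symmetric Borel measure on ℝ^N, and let φ : ℝ → ℝ be nondecreasing, globally Lipschitz, with φ(0) = 0. Let w, ŵ, ρ, ρ̂ ∈ L^1(ℝ^N) and suppose w is an a.e.-subsolution of (EP) with right-hand side ρ (i.e. w(x) − L^ν[φ∘w](x) ≤ ρ(x) for a.e. x) and ŵ is an a.e.-supersolution of (EP) with right-hand side ρ̂ (i.e. ŵ(x) − L^ν[φ∘ŵ](x) ≥ ρ̂(x) for a.e. x). Then ∫_{ℝ^N} (w(x) − ŵ(x))^+ dx ≤ ∫_{ℝ^N} (ρ(x) − ρ̂(x))^+ dx, where a^+ := max(a, 0). -/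
open MeasureTheory ENNReal
open scoped ENNReal NNReal

noncomputable section

variable {N : ℕ}


/-- Integrability of `(x,z) ↦ ψ(x+z)` on the product of Lebesgue measure with a finite measure. -/
lemma aux_prod_integrable (ν : Measure (EuclideanSpace ℝ (Fin N))) [IsFiniteMeasure ν]
    {ψ : EuclideanSpace ℝ (Fin N) → ℝ} (hm : Measurable ψ) (hi : Integrable ψ volume) :
    Integrable (fun p : EuclideanSpace ℝ (Fin N) × EuclideanSpace ℝ (Fin N) => ψ (p.1 + p.2))
      ((volume : Measure (EuclideanSpace ℝ (Fin N))).prod ν) := by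
  have hmp : Measurable (fun p : EuclideanSpace ℝ (Fin N) × EuclideanSpace ℝ (Fin N) =>
      ψ (p.1 + p.2)) := hm.comp (measurable_fst.add measurable_snd)
  refine ⟨hmp.aestronglyMeasurable, ?_⟩
  rw [HasFiniteIntegral]
  calc ∫⁻ p, ‖ψ (p.1 + p.2)‖₊ ∂((volume : Measure (EuclideanSpace ℝ (Fin N))).prod ν)
      = ∫⁻ z, ∫⁻ x, (‖ψ (x + z)‖₊ : ℝ≥0∞) ∂volume ∂ν :=
        lintegral_prod_symm _ (hmp.nnnorm.coe_nnreal_ennreal).aemeasurable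
    _ = ∫⁻ z, ∫⁻ x, (‖ψ x‖₊ : ℝ≥0∞) ∂volume ∂ν := by
        refine lintegral_congr fun z => ?_
        exact lintegral_add_right_eq_self (fun x => (‖ψ x‖₊ : ℝ≥0∞)) z
    _ = ν Set.univ * ∫⁻ x, (‖ψ x‖₊ : ℝ≥0∞) ∂volume := by rw [lintegral_const, mul_comm]
    _ < ⊤ := ENNReal.mul_lt_top (measure_lt_top ν _) hi.2

/-- Almost every translate avoids a Lebesgue-null set, `ν`-a.e. -/
lemma aux_null_translate (ν : Measure (EuclideanSpace ℝ (Fin N))) [IsFiniteMeasure ν]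
    {T : Set (EuclideanSpace ℝ (Fin N))} (hT : MeasurableSet T) (hT0 : volume T = 0) :
    ∀ᵐ x ∂(volume : Measure (EuclideanSpace ℝ (Fin N))), ∀ᵐ z ∂ν, x + z ∉ T := by
  have hmeas : Measurable (fun p : EuclideanSpace ℝ (Fin N) × EuclideanSpace ℝ (Fin N) =>
      T.indicator (fun _ => (1 : ℝ≥0∞)) (p.1 + p.2)) :=
    (measurable_indicator_const_iff 1).2 hT |>.comp (measurable_fst.add measurable_snd)
  have key : ∫⁻ x, ∫⁻ z, T.indicator (fun _ => (1 : ℝ≥0∞)) (x + z) ∂ν ∂(volume) = 0 := by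
    rw [← lintegral_prod _ hmeas.aemeasurable, lintegral_prod_symm _ hmeas.aemeasurable]
    have : ∀ z, ∫⁻ x, T.indicator (fun _ => (1 : ℝ≥0∞)) (x + z) ∂(volume) = 0 := by
      intro z
      rw [lintegral_add_right_eq_self (fun x => T.indicator (fun _ => (1:ℝ≥0∞)) x) z,
        lintegral_indicator hT _]
      simp [hT0]
    simp [this]
  have hmeas2 : Measurable fun x => ∫⁻ z, T.indicator (fun _ => (1 : ℝ≥0∞)) (x + z) ∂ν :=
    Measurable.lintegral_prod_right (f := fun x z => T.indicator (fun _ => (1:ℝ≥0∞)) (x + z)) hmeas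
  have h0 : ∀ᵐ x ∂(volume : Measure (EuclideanSpace ℝ (Fin N))),
      ∫⁻ z, T.indicator (fun _ => (1 : ℝ≥0∞)) (x + z) ∂ν = 0 :=
    (lintegral_eq_zero_iff hmeas2).1 key
  filter_upwards [h0] with x hx
  have := (lintegral_eq_zero_iff ((((measurable_indicator_const_iff 1).2 hT)).comp
    (measurable_const_add x))).1 hx
  filter_upwards [this] with z hz
  intro hmem
  simp [Set.indicator_of_mem hmem] at hz

lemma aux_integral_swap (ν : Measure (EuclideanSpace ℝ (Fin N))) [IsFiniteMeasure ν]
    {ψ : EuclideanSpace ℝ (Fin N) → ℝ} (hm : Measurable ψ) (hi : Integrable ψ volume) :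
    ∫ x, (∫ z, ψ (x + z) ∂ν) ∂(volume : Measure (EuclideanSpace ℝ (Fin N)))
      = (ν Set.univ).toReal * ∫ x, ψ x ∂volume := by
  have hprod := aux_prod_integrable ν hm hi
  have := integral_integral_swap (f := fun x z => ψ (x + z)) (μ := (volume : Measure (EuclideanSpace ℝ (Fin N)))) (ν := ν) hprod
  rw [this]
  have : ∀ z, ∫ x, ψ (x + z) ∂(volume : Measure (EuclideanSpace ℝ (Fin N))) = ∫ x, ψ x ∂volume :=
    fun z => integral_add_right_eq_self ψ z
  simp only [this, integral_const, smul_eq_mul, measureReal_def]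

theorem stmt5 {N : ℕ} (hN : 1 ≤ N)
    (ν : Measure (EuclideanSpace ℝ (Fin N))) [IsFiniteMeasure ν]
    (hsym : ν.map (fun z => -z) = ν)
    (φ : ℝ → ℝ) (hmono : Monotone φ)
    (L : ℝ≥0) (hLip : LipschitzWith L φ) (hφ0 : φ 0 = 0)
    (w wh ρ ρ' : EuclideanSpace ℝ (Fin N) → ℝ)
    (hw : Integrable w volume) (hwh : Integrable wh volume)
    (hρ : Integrable ρ volume) (hρ' : Integrable ρ' volume)
    (hsub : ∀ᵐ x ∂(volume : Measure (EuclideanSpace ℝ (Fin N))),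
      w x - Lnu ν (fun y => φ (w y)) x ≤ ρ x)
    (hsup : ∀ᵐ x ∂(volume : Measure (EuclideanSpace ℝ (Fin N))),
      ρ' x ≤ wh x - Lnu ν (fun y => φ (wh y)) x) :
    ∫ x, max (w x - wh x) 0 ≤ ∫ x, max (ρ x - ρ' x) 0 := by
  set μ : Measure (EuclideanSpace ℝ (Fin N)) := volume with hμ
  -- measurable representatives
  obtain ⟨hw0m, hw0e⟩ : Measurable (hw.1.aemeasurable.mk w) ∧ w =ᵐ[μ] hw.1.aemeasurable.mk w :=
    ⟨hw.1.aemeasurable.measurable_mk, hw.1.aemeasurable.ae_eq_mk⟩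
  set w₀ := hw.1.aemeasurable.mk w with hw₀def
  obtain ⟨hwh0m, hwh0e⟩ : Measurable (hwh.1.aemeasurable.mk wh) ∧ wh =ᵐ[μ] hwh.1.aemeasurable.mk wh :=
    ⟨hwh.1.aemeasurable.measurable_mk, hwh.1.aemeasurable.ae_eq_mk⟩
  set wh₀ := hwh.1.aemeasurable.mk wh with hwh₀def
  have hw0i : Integrable w₀ μ := hw.congr hw0e
  have hwh0i : Integrable wh₀ μ := hwh.congr hwh0e
  have hui : Integrable (fun x => w₀ x - wh₀ x) μ := hw0i.sub hwh0i
  have hfi : Integrable (fun x => ρ x - ρ' x) μ := hρ.sub hρ'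
  have hφc : Continuous φ := hLip.continuous
  have hlipnorm : ∀ a b : ℝ, ‖φ a - φ b‖ ≤ L * ‖a - b‖ := by
    intro a b
    simpa [Real.dist_eq, Real.norm_eq_abs] using hLip.dist_le_mul a b
  -- the functions
  set g₀ : EuclideanSpace ℝ (Fin N) → ℝ := fun x => φ (w₀ x) - φ (wh₀ x) with hg₀def
  have hg₀m : Measurable g₀ := (hφc.measurable.comp hw0m).sub (hφc.measurable.comp hwh0m)
  have hg₀i : Integrable g₀ μ := by
    refine Integrable.mono' (((hw0i.sub hwh0i).norm.const_mul L)) hg₀m.aestronglyMeasurable ?_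
    filter_upwards with x
    exact hlipnorm (w₀ x) (wh₀ x)
  have hφw0i : Integrable (fun x => φ (w₀ x)) μ := by
    refine Integrable.mono' (hw0i.norm.const_mul L) ((hφc.measurable.comp hw0m)).aestronglyMeasurable ?_
    filter_upwards with x
    simpa [hφ0] using hlipnorm (w₀ x) 0
  have hφwh0i : Integrable (fun x => φ (wh₀ x)) μ := by
    refine Integrable.mono' (hwh0i.norm.const_mul L) ((hφc.measurable.comp hwh0m)).aestronglyMeasurable ?_
    filter_upwards with x
    simpa [hφ0] using hlipnorm (wh₀ x) 0
  -- congruence of Lnu under a.e. modification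
  have hcongr : ∀ (v v₀ : EuclideanSpace ℝ (Fin N) → ℝ), Integrable v μ → (v =ᵐ[μ] v₀) →
      ∀ᵐ x ∂μ, Lnu ν (fun y => φ (v y)) x = ∫ z, (φ (v₀ (x + z)) - φ (v₀ x)) ∂ν := by
    intro v v₀ hvi hve
    obtain ⟨T, hST, hTmeas, hT0⟩ := exists_measurable_superset_of_null (ae_iff.1 hve)
    filter_upwards [aux_null_translate ν hTmeas hT0, hve] with x hx hxe
    rw [Lnu]
    refine integral_congr_ae ?_
    filter_upwards [hx] with z hz
    have : v (x + z) = v₀ (x + z) := by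
      by_contra hne
      exact hz (hST hne)
    rw [this, hxe]
  have haeIw : ∀ᵐ x ∂μ, Integrable (fun z => φ (w₀ (x + z))) ν := by
    have := (aux_prod_integrable ν (hφc.measurable.comp hw0m) hφw0i).prod_right_ae
    simpa using this
  have haeIwh : ∀ᵐ x ∂μ, Integrable (fun z => φ (wh₀ (x + z))) ν := by
    have := (aux_prod_integrable ν (hφc.measurable.comp hwh0m) hφwh0i).prod_right_ae
    simpa using this
  set Lg : EuclideanSpace ℝ (Fin N) → ℝ := fun x => ∫ z, (g₀ (x + z) - g₀ x) ∂ν with hLgdef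
  have hMain : ∀ᵐ x ∂μ, w₀ x - wh₀ x ≤ (ρ x - ρ' x) + Lg x := by
    filter_upwards [hsub, hsup, hw0e, hwh0e, hcongr w w₀ hw hw0e, hcongr wh wh₀ hwh hwh0e,
      haeIw, haeIwh] with x h1 h2 e1 e2 c1 c2 i1 i2
    have hA1 : ∫ z, (φ (w₀ (x + z)) - φ (w₀ x)) ∂ν
        = (∫ z, φ (w₀ (x + z)) ∂ν) - (ν Set.univ).toReal * φ (w₀ x) := by
      rw [integral_sub i1 (integrable_const _), integral_const, smul_eq_mul, measureReal_def]
    have hA2 : ∫ z, (φ (wh₀ (x + z)) - φ (wh₀ x)) ∂ν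
        = (∫ z, φ (wh₀ (x + z)) ∂ν) - (ν Set.univ).toReal * φ (wh₀ x) := by
      rw [integral_sub i2 (integrable_const _), integral_const, smul_eq_mul, measureReal_def]
    have hgint : Integrable (fun z => g₀ (x + z)) ν := i1.sub i2
    have hA3 : Lg x = (∫ z, g₀ (x + z) ∂ν) - (ν Set.univ).toReal * g₀ x := by
      show ∫ z, (g₀ (x + z) - g₀ x) ∂ν = _
      rw [integral_sub hgint (integrable_const _), integral_const, smul_eq_mul, measureReal_def]
    have hA4 : ∫ z, g₀ (x + z) ∂ν
        = (∫ z, φ (w₀ (x + z)) ∂ν) - ∫ z, φ (wh₀ (x + z)) ∂ν := by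
      rw [← integral_sub i1 i2]
    have hgx : g₀ x = φ (w₀ x) - φ (wh₀ x) := by rw [hg₀def]
    have hprod : (ν Set.univ).toReal * g₀ x
        = (ν Set.univ).toReal * φ (w₀ x) - (ν Set.univ).toReal * φ (wh₀ x) := by
      rw [hgx]; ring
    rw [c1] at h1
    rw [c2] at h2
    linarith
  -- the set where w₀ > wh₀
  set A : Set (EuclideanSpace ℝ (Fin N)) := {x | wh₀ x < w₀ x} with hAdef
  have hA : MeasurableSet A := measurableSet_lt hwh0m hw0m
  have hind_u : ∀ x, A.indicator (fun x => w₀ x - wh₀ x) x = max (w₀ x - wh₀ x) 0 := by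
    intro x
    by_cases h : x ∈ A
    · rw [Set.indicator_of_mem h]
      have : wh₀ x < w₀ x := h
      exact (max_eq_left (by linarith)).symm
    · rw [Set.indicator_of_notMem h]
      have : ¬ wh₀ x < w₀ x := h
      exact (max_eq_right (by push_neg at this; linarith)).symm
  have hind_g : ∀ x, A.indicator g₀ x = max (g₀ x) 0 := by
    intro x
    by_cases h : x ∈ A
    · rw [Set.indicator_of_mem h]
      have : wh₀ x < w₀ x := h
      have := hmono this.le
      exact (max_eq_left (by simp [hg₀def]; linarith)).symm
    · rw [Set.indicator_of_notMem h]
      have h' : ¬ wh₀ x < w₀ x := h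
      push_neg at h'
      have := hmono h'
      exact (max_eq_right (by simp [hg₀def]; linarith)).symm
  -- integrability of Lg
  have hgprod := aux_prod_integrable ν hg₀m hg₀i
  have hh_int : Integrable (fun x => ∫ z, g₀ (x + z) ∂ν) μ := by
    have := hgprod.integral_prod_left
    simpa using this
  have IAE : ∀ᵐ x ∂μ, Integrable (fun z => g₀ (x + z)) ν := by
    have := hgprod.prod_right_ae
    simpa using this
  set c : ℝ := (ν Set.univ).toReal with hcdef
  have hLg_eq : Lg =ᵐ[μ] fun x => (∫ z, g₀ (x + z) ∂ν) - c * g₀ x := by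
    filter_upwards [IAE] with x hx
    rw [hLgdef]
    simp only
    rw [integral_sub hx (integrable_const _), integral_const, smul_eq_mul, measureReal_def]
  have hLg_int : Integrable Lg μ := (hh_int.sub (hg₀i.const_mul c)).congr hLg_eq.symm
  -- main chain
  have step1 : ∫ x, max (w x - wh x) 0 ∂μ = ∫ x, A.indicator (fun x => w₀ x - wh₀ x) x ∂μ := by
    refine integral_congr_ae ?_
    filter_upwards [hw0e, hwh0e] with x e1 e2
    rw [hind_u x, e1, e2]
  have step2 : ∫ x, A.indicator (fun x => w₀ x - wh₀ x) x ∂μ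
      ≤ ∫ x, A.indicator (fun x => (ρ x - ρ' x) + Lg x) x ∂μ := by
    refine integral_mono_ae (hui.indicator hA)
      ((hfi.add hLg_int).indicator hA) ?_
    filter_upwards [hMain] with x hx
    by_cases h : x ∈ A
    · rw [Set.indicator_of_mem h, Set.indicator_of_mem h]
      exact hx
    · rw [Set.indicator_of_notMem h, Set.indicator_of_notMem h]
  have step3 : ∫ x, A.indicator (fun x => (ρ x - ρ' x) + Lg x) x ∂μ
      = (∫ x, A.indicator (fun x => ρ x - ρ' x) x ∂μ) + ∫ x, A.indicator Lg x ∂μ := by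
    rw [← integral_add (hfi.indicator hA) (hLg_int.indicator hA)]
    refine integral_congr_ae (Filter.Eventually.of_forall fun x => ?_)
    by_cases h : x ∈ A <;>
      simp [Set.indicator_of_mem, Set.indicator_of_notMem, h, Pi.add_apply]
  have step4 : ∫ x, A.indicator (fun x => ρ x - ρ' x) x ∂μ ≤ ∫ x, max (ρ x - ρ' x) 0 ∂μ := by
    refine integral_mono (hfi.indicator hA) hfi.pos_part fun x => ?_
    by_cases h : x ∈ A
    · rw [Set.indicator_of_mem h]; exact le_max_left _ _
    · rw [Set.indicator_of_notMem h]; exact le_max_right _ _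
  have step5 : ∫ x, A.indicator Lg x ∂μ ≤ 0 := by
    have e5 : ∫ x, A.indicator Lg x ∂μ
        = ∫ x, A.indicator (fun x => (∫ z, g₀ (x + z) ∂ν) - c * g₀ x) x ∂μ := by
      refine integral_congr_ae ?_
      filter_upwards [hLg_eq] with x hx
      by_cases h : x ∈ A
      · rw [Set.indicator_of_mem h, Set.indicator_of_mem h]; exact hx
      · rw [Set.indicator_of_notMem h, Set.indicator_of_notMem h]
    have e6 : ∫ x, A.indicator (fun x => (∫ z, g₀ (x + z) ∂ν) - c * g₀ x) x ∂μ
        = (∫ x, A.indicator (fun x => ∫ z, g₀ (x + z) ∂ν) x ∂μ)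
          - c * ∫ x, A.indicator g₀ x ∂μ := by
      have hcg : Integrable (fun x => c * A.indicator g₀ x) μ := (hg₀i.indicator hA).const_mul c
      rw [← integral_const_mul, ← integral_sub (hh_int.indicator hA) hcg]
      refine integral_congr_ae (Filter.Eventually.of_forall fun x => ?_)
      by_cases h : x ∈ A
      · simp [Set.indicator_of_mem h]
      · simp [Set.indicator_of_notMem h]
    have e7 : ∫ x, A.indicator g₀ x ∂μ = ∫ x, max (g₀ x) 0 ∂μ :=
      integral_congr_ae (Filter.Eventually.of_forall hind_g)
    have e8 : ∫ x, A.indicator (fun x => ∫ z, g₀ (x + z) ∂ν) x ∂μ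
        ≤ c * ∫ x, max (g₀ x) 0 ∂μ := by
      have hpos_prod : Integrable
          (fun p : EuclideanSpace ℝ (Fin N) × EuclideanSpace ℝ (Fin N) =>
            max (g₀ (p.1 + p.2)) 0) (μ.prod ν) := hgprod.pos_part
      have hhplus_int : Integrable (fun x => ∫ z, max (g₀ (x + z)) 0 ∂ν) μ := by
        have := hpos_prod.integral_prod_left
        simpa using this
      have hmono8 : ∀ᵐ x ∂μ, A.indicator (fun x => ∫ z, g₀ (x + z) ∂ν) x
          ≤ ∫ z, max (g₀ (x + z)) 0 ∂ν := by
        filter_upwards [IAE] with x hx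
        by_cases h : x ∈ A
        · rw [Set.indicator_of_mem h]
          exact integral_mono hx hx.pos_part fun z => le_max_left _ _
        · rw [Set.indicator_of_notMem h]
          exact integral_nonneg fun z => le_max_right _ _
      calc ∫ x, A.indicator (fun x => ∫ z, g₀ (x + z) ∂ν) x ∂μ
          ≤ ∫ x, (∫ z, max (g₀ (x + z)) 0 ∂ν) ∂μ :=
            integral_mono_ae (hh_int.indicator hA) hhplus_int hmono8
        _ = c * ∫ x, max (g₀ x) 0 ∂μ :=
            aux_integral_swap ν (hg₀m.max measurable_const) hg₀i.pos_part
    rw [e5, e6, e7]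
    linarith [e8]
  rw [step1]
  linarith [step2, step3, step4, step5]
end
end

section
/- Let ν be a nonnegative finite symmetric Borel measure on ℝ^N, and let φ : ℝ → ℝ be nondecreasing and locally Lipschitz. Let w, ρ ∈ L^∞(ℝ^N) and suppose w satisfies w(x) − L^ν[φ∘w](x) = ρ(x) for Lebesgue-a.e. x ∈ ℝ^N. Then ‖w‖_{L^∞(ℝ^N)} ≤ ‖ρ‖_{L^∞(ℝ^N)}. -/
open MeasureTheory ENNReal
open scoped ENNReal NNReal

noncomputable section

/-- One-sided essential upper bound. -/
lemma one_sided {N : ℕ}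
    (ν : Measure (EuclideanSpace ℝ (Fin N))) [IsFiniteMeasure ν]
    (φ : ℝ → ℝ) (hmono : Monotone φ) (hcont : Continuous φ)
    (w ρ : EuclideanSpace ℝ (Fin N) → ℝ)
    (hw : MemLp w ∞ volume) (hρ : MemLp ρ ∞ volume)
    (heq : ∀ᵐ x ∂(volume : Measure (EuclideanSpace ℝ (Fin N))),
      w x - Lnu ν (fun y => φ (w y)) x = ρ x) :
    ∀ᵐ x ∂(volume : Measure (EuclideanSpace ℝ (Fin N))),
      w x ≤ (eLpNorm ρ ∞ volume).toReal := by
  set μ : Measure (EuclideanSpace ℝ (Fin N)) := volume with hμ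
  set R : ℝ := (eLpNorm ρ ∞ volume).toReal with hR
  set C : ℝ := (eLpNorm w ∞ volume).toReal with hC
  -- a.e. bounds
  have hρbd : ∀ᵐ x ∂μ, |ρ x| ≤ R := by
    filter_upwards [ae_le_eLpNormEssSup (f := ρ) (μ := μ)] with x hx
    have h2 : eLpNormEssSup ρ μ ≠ ⊤ := by
      rw [← eLpNorm_exponent_top]; exact hρ.2.ne
    have := ENNReal.toReal_mono h2 hx
    simpa [hR, eLpNorm_exponent_top] using this
  have hwbd : ∀ᵐ x ∂μ, |w x| ≤ C := by
    filter_upwards [ae_le_eLpNormEssSup (f := w) (μ := μ)] with x hx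
    have h2 : eLpNormEssSup w μ ≠ ⊤ := by
      rw [← eLpNorm_exponent_top]; exact hw.2.ne
    have := ENNReal.toReal_mono h2 hx
    simpa [hC, eLpNorm_exponent_top] using this
  have hμne : μ ≠ 0 := by
    have := Metric.measure_ball_pos μ (0 : EuclideanSpace ℝ (Fin N)) one_pos
    intro h; rw [h] at this; simp at this
  haveI : (ae μ).NeBot := ae_neBot.mpr hμne
  -- the essential supremum as an infimum
  set S : Set ℝ := {t | ∀ᵐ x ∂μ, w x ≤ t} with hS
  have hCS : C ∈ S := by filter_upwards [hwbd] with x hx using (abs_le.mp hx).2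
  have hSne : S.Nonempty := ⟨C, hCS⟩
  have hSbd : BddBelow S := by
    refine ⟨-C, fun t ht => ?_⟩
    have ht' : ∀ᵐ x ∂μ, w x ≤ t := ht
    obtain ⟨x, hx1, hx2⟩ := (ht'.and hwbd).exists
    exact le_trans (neg_le_of_abs_le hx2) hx1
  set m : ℝ := sInf S with hm
  have h1 : ∀ᵐ x ∂μ, w x ≤ m := by
    have hn : ∀ n : ℕ, ∀ᵐ x ∂μ, w x ≤ m + 1 / (n + 1) := by
      intro n
      obtain ⟨t, htS, htlt⟩ := exists_lt_of_csInf_lt hSne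
        (by have : (0:ℝ) < 1 / (n + 1 : ℝ) := by positivity
            linarith : m < m + 1 / (n + 1 : ℝ))
      filter_upwards [htS] with x hx using hx.trans htlt.le
    filter_upwards [ae_all_iff.mpr hn] with x hx
    by_contra hcon
    push_neg at hcon
    obtain ⟨n, hn'⟩ := exists_nat_one_div_lt (by linarith : (0:ℝ) < w x - m)
    have := hx n
    linarith
  have h2 : ∀ ε : ℝ, 0 < ε → ¬ (∀ᵐ x ∂μ, w x ≤ m - ε) := by
    intro ε hε hcon
    have : m ≤ m - ε := csInf_le hSbd hcon
    linarith
  -- Fubini step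
  set B : Set (EuclideanSpace ℝ (Fin N)) := toMeasurable μ {x | m < w x} with hB
  have hBmeas : MeasurableSet B := measurableSet_toMeasurable _ _
  have hBnull : μ B = 0 := by
    rw [hB, measure_toMeasurable]
    have := ae_iff.mp h1
    simpa [not_le] using this
  have hfub : ∀ᵐ x ∂μ, ∀ᵐ z ∂ν, w (x + z) ≤ m := by
    have hprodset : MeasurableSet {p : EuclideanSpace ℝ (Fin N) × EuclideanSpace ℝ (Fin N) | p.1 + p.2 ∈ B} := by
      exact (measurable_fst.add measurable_snd) hBmeas
    have hmeasF : Measurable (fun x => ν {z | x + z ∈ B}) := by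
      have h := measurable_measure_prodMk_left (ν := ν) hprodset
      exact h
    have hzero : ∫⁻ x, ν {z | x + z ∈ B} ∂μ = 0 := by
      have : ∫⁻ x, ν {z | x + z ∈ B} ∂μ = (μ.prod ν) {p | p.1 + p.2 ∈ B} := by
        rw [Measure.prod_apply hprodset]; rfl
      rw [this, Measure.prod_apply_symm hprodset]
      have : ∀ z, μ ((fun x => (x, z)) ⁻¹' {p : EuclideanSpace ℝ (Fin N) × EuclideanSpace ℝ (Fin N) | p.1 + p.2 ∈ B}) = 0 := by
        intro z
        have : ((fun x => (x, z)) ⁻¹' {p : EuclideanSpace ℝ (Fin N) × EuclideanSpace ℝ (Fin N) | p.1 + p.2 ∈ B}) = (fun x => x + z) ⁻¹' B := rfl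
        rw [this, measure_preimage_add_right, hBnull]
      simp only [this, lintegral_zero]
    have := (lintegral_eq_zero_iff hmeasF).mp hzero
    filter_upwards [this] with x hx
    have hxν : ν {z | x + z ∈ B} = 0 := hx
    have hsub : {z | ¬ w (x + z) ≤ m} ⊆ {z | x + z ∈ B} := by
      intro z hz
      exact subset_toMeasurable _ _ (by simpa [not_le] using hz)
    exact ae_iff.mpr (measure_mono_null hsub hxν)
  -- key inequality for each ε
  set c : ℝ := (ν Set.univ).toReal with hc
  have hc0 : 0 ≤ c := ENNReal.toReal_nonneg
  have key : ∀ ε : ℝ, 0 < ε → m - ε ≤ R + c * (φ m - φ (m - ε)) := by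
    intro ε hε
    have hne : ({x | m - ε < w x} ∩ {x | w x - Lnu ν (fun y => φ (w y)) x = ρ x ∧ |ρ x| ≤ R ∧ w x ≤ m ∧ (∀ᵐ z ∂ν, w (x + z) ≤ m)}).Nonempty := by
      by_contra hcon
      rw [Set.not_nonempty_iff_eq_empty] at hcon
      apply h2 ε hε
      have hG : ∀ᵐ x ∂μ, w x - Lnu ν (fun y => φ (w y)) x = ρ x ∧ |ρ x| ≤ R ∧ w x ≤ m ∧ (∀ᵐ z ∂ν, w (x + z) ≤ m) := by
        filter_upwards [heq, hρbd, h1, hfub] with x a b d e using ⟨a, b, d, e⟩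
      filter_upwards [hG] with x hx
      by_contra hcon2
      push_neg at hcon2
      exact Set.eq_empty_iff_forall_notMem.mp hcon x ⟨hcon2, hx⟩
    obtain ⟨x₀, hx⟩ := hne
    obtain ⟨hx1, hx2, hx3, hx4, hx5⟩ := hx
    simp only [Set.mem_setOf_eq] at hx1
    -- bound the Lévy term
    have hLbd : Lnu ν (fun y => φ (w y)) x₀ ≤ c * (φ m - φ (m - ε)) := by
      have hφbd : ∀ᵐ z ∂ν, φ (w (x₀ + z)) - φ (w x₀) ≤ φ m - φ (m - ε) := by
        filter_upwards [hx5] with z hz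
        have := hmono hz
        have := hmono hx1.le
        linarith
      by_cases hint : Integrable (fun z => φ (w (x₀ + z)) - φ (w x₀)) ν
      · have := integral_mono_ae hint (integrable_const (φ m - φ (m - ε))) hφbd
        rw [integral_const] at this
        simpa [Lnu, hc, smul_eq_mul, Measure.real] using this
      · rw [Lnu, integral_undef hint]
        have : φ (m - ε) ≤ φ m := hmono (by linarith)
        nlinarith
    have : w x₀ = ρ x₀ + Lnu ν (fun y => φ (w y)) x₀ := by linarith [hx2]
    have hρx : ρ x₀ ≤ R := (abs_le.mp hx3).2
    linarith
  -- take ε → 0 using continuity of φ at m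
  have hmR : m ≤ R := by
    have htend : Filter.Tendsto (fun ε : ℝ => R + c * (φ m - φ (m - ε)) + ε)
        (nhdsWithin 0 (Set.Ioi 0)) (nhds R) := by
      have h0 : Filter.Tendsto (fun ε : ℝ => R + c * (φ m - φ (m - ε)) + ε) (nhds 0)
          (nhds (R + c * (φ m - φ (m - 0)) + 0)) := by
        apply Filter.Tendsto.add _ Filter.tendsto_id
        apply Filter.Tendsto.add tendsto_const_nhds
        exact (tendsto_const_nhds.sub ((hcont.tendsto _).comp
          (tendsto_const_nhds.sub Filter.tendsto_id))).const_mul c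
      simpa using h0.mono_left nhdsWithin_le_nhds
    refine ge_of_tendsto htend ?_
    filter_upwards [self_mem_nhdsWithin] with ε hε
    have := key ε hε
    linarith
  filter_upwards [h1] with x hx using hx.trans hmR

theorem stmt7 {N : ℕ} (hN : 1 ≤ N)
    (ν : Measure (EuclideanSpace ℝ (Fin N))) [IsFiniteMeasure ν]
    (hsym : ν.map (fun z => -z) = ν)
    (φ : ℝ → ℝ) (hmono : Monotone φ) (hLip : LocallyLipschitz φ)
    (w ρ : EuclideanSpace ℝ (Fin N) → ℝ)
    (hw : MemLp w ∞ volume) (hρ : MemLp ρ ∞ volume)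
    (heq : ∀ᵐ x ∂(volume : Measure (EuclideanSpace ℝ (Fin N))),
      w x - Lnu ν (fun y => φ (w y)) x = ρ x) :
    eLpNorm w ∞ volume ≤ eLpNorm ρ ∞ volume := by
  have hcont : Continuous φ := hLip.continuous
  have h1 := one_sided ν φ hmono hcont w ρ hw hρ heq
  set φ' : ℝ → ℝ := fun t => -(φ (-t)) with hφ'
  have hmono' : Monotone φ' := fun a b hab => by
    simp only [hφ', neg_le_neg_iff]
    exact hmono (neg_le_neg hab)
  have hcont' : Continuous φ' := (hcont.comp continuous_neg).neg
  have heq' : ∀ᵐ x ∂(volume : Measure (EuclideanSpace ℝ (Fin N))),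
      (-w) x - Lnu ν (fun y => φ' ((-w) y)) x = (-ρ) x := by
    filter_upwards [heq] with x hx
    have hL : Lnu ν (fun y => φ' ((-w) y)) x = - Lnu ν (fun y => φ (w y)) x := by
      simp only [Lnu, hφ', Pi.neg_apply, neg_neg]
      rw [← integral_neg]
      congr 1; ext z; ring
    simp only [Pi.neg_apply] at hL ⊢
    rw [hL]
    linarith
  have h2 := one_sided ν φ' hmono' hcont' (-w) (-ρ) hw.neg hρ.neg heq'
  rw [eLpNorm_neg] at h2
  have hbd : ∀ᵐ x ∂(volume : Measure (EuclideanSpace ℝ (Fin N))),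
      ‖w x‖ ≤ (eLpNorm ρ ∞ volume).toReal := by
    filter_upwards [h1, h2] with x a b
    rw [Real.norm_eq_abs, abs_le]
    refine ⟨?_, a⟩
    have : -(w x) ≤ (eLpNorm ρ ∞ volume).toReal := by simpa using b
    linarith
  calc eLpNorm w ∞ volume = eLpNormEssSup w volume := eLpNorm_exponent_top
    _ ≤ ENNReal.ofReal (eLpNorm ρ ∞ volume).toReal := eLpNormEssSup_le_of_ae_bound hbd
    _ ≤ eLpNorm ρ ∞ volume := ENNReal.ofReal_toReal_le
end
end

section
/- Under the scheme assumptions, let (U^j) and (V^j) be solutions of the scheme with data (u_0, f) and (v_0, g) respectively, where v_0 and g satisfy the same integrability assumptions as u_0 and f. If u_0 ≤ v_0 a.e. on ℝ^N and f ≤ g a.e. on ℝ^N × (0,T), then U^j ≤ V^j a.e. on ℝ^N for every j = 0,...,J. -/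
open MeasureTheory ENNReal
open scoped ENNReal NNReal

noncomputable section

/-- The time-averaged source term
`F^j(x) := (1/Δt_j) ∫_{t_{j−1}}^{t_j} f(x,t) dt`. -/
def Favg {N : ℕ} (t : ℕ → ℝ) (f : EuclideanSpace ℝ (Fin N) → ℝ → ℝ)
    (j : ℕ) (x : EuclideanSpace ℝ (Fin N)) : ℝ :=
  (t j - t (j - 1))⁻¹ * ∫ τ in Set.Ioc (t (j - 1)) (t j), f x τ

/-- `U = (U^j)_{j=0}^J` is a solution of the numerical scheme
`U^j = U^{j−1} + Δt_j (L^{ν₁}[φ₁∘U^j] + L^{ν₂}[φ₂∘U^{j−1}] + F^j)` with data `u₀, f`: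
each `U^j ∈ L¹ ∩ L^∞`, `U^0 = u₀` a.e., and each step holds a.e. -/
def IsSchemeSol {N : ℕ} (ν₁ ν₂ : Measure (EuclideanSpace ℝ (Fin N)))
    (φ₁ φ₂ : ℝ → ℝ) (t : ℕ → ℝ) (J : ℕ)
    (u₀ : EuclideanSpace ℝ (Fin N) → ℝ) (f : EuclideanSpace ℝ (Fin N) → ℝ → ℝ)
    (U : ℕ → EuclideanSpace ℝ (Fin N) → ℝ) : Prop :=
  (∀ j ≤ J, Integrable (U j) volume ∧ MemLp (U j) ∞ volume) ∧
  U 0 =ᵐ[volume] u₀ ∧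
  ∀ j, 1 ≤ j → j ≤ J →
    ∀ᵐ x ∂(volume : Measure (EuclideanSpace ℝ (Fin N))),
      U j x = U (j - 1) x + (t j - t (j - 1)) *
        (Lnu ν₁ (fun y => φ₁ (U j y)) x + Lnu ν₂ (fun y => φ₂ (U (j - 1) y)) x +
          Favg t f j x)

abbrev EN (N : ℕ) := EuclideanSpace ℝ (Fin N)

/-- Fubini for null sets. -/

lemma ae_ae_add (ν : Measure (EN N)) [SFinite ν] {P : EN N → Prop}
    (hP : ∀ᵐ y ∂(volume : Measure (EN N)), P y) :
    ∀ᵐ x ∂(volume : Measure (EN N)), ∀ᵐ z ∂ν, P (x + z) := by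
  obtain ⟨S, hSsub, hSmeas, hSnull⟩ := exists_measurable_superset_of_null hP
  have key : ∫⁻ x, (∫⁻ z, S.indicator (fun _ => (1:ENNReal)) (x + z) ∂ν) ∂(volume : Measure (EN N)) = 0 := by
    rw [lintegral_lintegral_swap]
    · have : ∀ z : EN N, ∫⁻ x, S.indicator (fun _ => (1:ENNReal)) (x + z) ∂(volume : Measure (EN N)) = 0 := by
        intro z
        rw [lintegral_indicator_const_comp (measurable_add_const z) hSmeas]
        have : (volume : Measure (EN N)) ((fun x => x + z) ⁻¹' S) = 0 := by
          rw [(measurePreserving_add_right (volume : Measure (EN N)) z).measure_preimage hSmeas.nullMeasurableSet]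
          exact hSnull
        simp [this]
      simp [this]
    · exact (measurable_const.indicator hSmeas |>.comp (measurable_fst.add measurable_snd)).aemeasurable
  have h1 := (lintegral_eq_zero_iff ?m).mp key
  · filter_upwards [h1] with x hx
    have h2 : ∫⁻ z, S.indicator (fun _ => (1:ENNReal)) (x + z) ∂ν = 0 := hx
    rw [lintegral_indicator_const_comp (measurable_const_add x) hSmeas] at h2
    rw [one_mul] at h2
    have := measure_eq_zero_iff_ae_notMem.mp h2
    filter_upwards [this] with z hz
    by_contra hc
    exact hz (hSsub hc)
  · exact Measurable.lintegral_prod_right <| (measurable_const.indicator hSmeas |>.comp (measurable_fst.add measurable_snd))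

set_option maxHeartbeats 1000000 in
/-- Key comparison lemma for the implicit step. -/
lemma key (ν : Measure (EN N)) [IsFiniteMeasure ν] (φ : ℝ → ℝ)
    (hφc : Continuous φ) (hφm : Monotone φ)
    (u v : EN N → ℝ) (hum : Measurable u) (hvm : Measurable v) (M : ℝ) (hM : 0 ≤ M)
    (hub : ∀ᵐ x ∂(volume : Measure (EN N)), |u x| ≤ M)
    (hvb : ∀ᵐ x ∂(volume : Measure (EN N)), |v x| ≤ M)
    (hint : Integrable (fun x => u x - v x) (volume : Measure (EN N))) (c : ℝ) (hc : 0 ≤ c)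
    (H : ∀ᵐ x ∂(volume : Measure (EN N)), u x - v x ≤
      c * ∫ z, ((φ (u (x+z)) - φ (v (x+z))) - (φ (u x) - φ (v x))) ∂ν) :
    ∀ᵐ x ∂(volume : Measure (EN N)), u x ≤ v x := by
  set vol : Measure (EN N) := volume with hvol
  set w : EN N → ℝ := fun y => φ (u y) - φ (v y) with hw
  have hwm : Measurable w := (hφc.measurable.comp hum).sub (hφc.measurable.comp hvm)
  set wp : EN N → ℝ := fun y => max (w y) 0 with hwp
  have hwpm : Measurable wp := hwm.max measurable_const
  have hwpnn : ∀ y, 0 ≤ wp y := fun y => le_max_right _ _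
  -- bound on φ on the relevant compact set
  obtain ⟨B, hB⟩ := (isCompact_Icc (a := -M) (b := M)).exists_bound_of_continuousOn
    hφc.continuousOn
  have hB0 : 0 ≤ B := le_trans (norm_nonneg _) (hB 0 (by constructor <;> simp [hM] <;> linarith))
  -- pointwise bounds
  have hwb : ∀ y, |u y| ≤ M → |v y| ≤ M → |w y| ≤ 2*B := by
    intro y hy1 hy2
    have h1 := hB (u y) (abs_le.mp hy1)
    have h2 := hB (v y) (abs_le.mp hy2)
    rw [Real.norm_eq_abs] at h1 h2
    have := abs_sub (φ (u y)) (φ (v y))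
    calc |w y| ≤ |φ (u y)| + |φ (v y)| := abs_sub _ _
    _ ≤ 2*B := by linarith
  have hwpb : ∀ y, |u y| ≤ M → |v y| ≤ M → wp y ≤ 2*B := by
    intro y hy1 hy2
    exact max_le (le_trans (le_abs_self _) (hwb y hy1 hy2)) (by linarith)
  -- the "good points"
  have hbdd : ∀ᵐ y ∂vol, |u y| ≤ M ∧ |v y| ≤ M := hub.and hvb
  -- case ν vanishes away from 0
  by_cases hν0 : ν {(0:EN N)}ᶜ = 0
  · have hz0 : ∀ᵐ z ∂ν, z = 0 := by
      rw [ae_iff]; convert hν0 using 2; ext; simp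
    filter_upwards [H] with x hx
    have : (∫ z, (w (x+z) - w x) ∂ν) = 0 := by
      rw [integral_congr_ae (g := fun _ => (0:ℝ)) (by filter_upwards [hz0] with z hz; simp [hz])]
      simp
    have hx' : u x - v x ≤ c * ∫ z, (w (x+z) - w x) ∂ν := hx
    rw [this] at hx'; linarith
  -- main case
  have hν0' : 0 < ν {(0:EN N)}ᶜ := pos_iff_ne_zero.mpr hν0
  set νR : ℝ := (ν Set.univ).toReal with hνR
  have hνRpos : 0 < νR := by
    refine ENNReal.toReal_pos ?_ (measure_ne_top ν _)
    intro h0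
    exact absurd (measure_mono_null (Set.subset_univ _) h0) hν0
  -- integrability of translates at good points
  have hgood : ∀ᵐ x ∂vol, (|u x| ≤ M ∧ |v x| ≤ M) ∧ (∀ᵐ z ∂ν, |u (x+z)| ≤ M ∧ |v (x+z)| ≤ M) ∧
      (u x - v x ≤ c * ∫ z, (w (x+z) - w x) ∂ν) := by
    exact (hbdd.and ((ae_ae_add ν hbdd).and H))
  -- integrability lemmas at a good point
  have hIw : ∀ x : EN N, (∀ᵐ z ∂ν, |u (x+z)| ≤ M ∧ |v (x+z)| ≤ M) →
      Integrable (fun z => w (x+z)) ν ∧ Integrable (fun z => wp (x+z)) ν := by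
    intro x hx
    constructor
    · refine (integrable_const (2*B)).mono' ((hwm.comp (measurable_const_add x)).aestronglyMeasurable) ?_
      filter_upwards [hx] with z hz
      exact hwb _ hz.1 hz.2
    · refine (integrable_const (2*B)).mono' ((hwpm.comp (measurable_const_add x)).aestronglyMeasurable) ?_
      filter_upwards [hx] with z hz
      rw [Real.norm_eq_abs, abs_of_nonneg (hwpnn _)]
      exact hwpb _ hz.1 hz.2
  -- step (ii): subharmonicity of wp
  have hii : ∀ᵐ x ∂vol, νR * wp x ≤ ∫ z, wp (x+z) ∂ν := by
    filter_upwards [hgood] with x ⟨⟨hxu, hxv⟩, hxz, hxH⟩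
    obtain ⟨hIwx, hIwpx⟩ := hIw x hxz
    have hnn : 0 ≤ ∫ z, wp (x+z) ∂ν := integral_nonneg (fun z => hwpnn _)
    rcases le_or_gt (wp x) 0 with hle | hlt
    · have : wp x = 0 := le_antisymm hle (hwpnn x)
      rw [this]; simpa using hnn
    · -- wp x > 0 hence w x > 0 hence u x > v x
      have hwx : 0 < w x := by
        by_contra hcon
        push_neg at hcon
        have : wp x = 0 := by simp [hwp, max_eq_right hcon]
        linarith
      have huv : v x < u x := by
        by_contra hcon
        push_neg at hcon
        exact absurd (sub_nonpos.mpr (hφm hcon)) (not_le.mpr hwx)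
      have hsplit : (∫ z, (w (x+z) - w x) ∂ν) = (∫ z, w (x+z) ∂ν) - νR * w x := by
        rw [integral_sub hIwx (integrable_const _), integral_const, measureReal_def, smul_eq_mul, mul_comm]
      have h1 : 0 < u x - v x := by linarith
      have h2 := lt_of_lt_of_le h1 hxH
      have hc' : 0 < c := by
        rcases lt_or_eq_of_le hc with h | h
        · exact h
        · rw [← h] at h2; simp at h2
      have h3 : 0 < ∫ z, (w (x+z) - w x) ∂ν := by
        by_contra hcon
        push_neg at hcon
        nlinarith
      have h4 : νR * w x < ∫ z, w (x+z) ∂ν := by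
        rw [hsplit] at h3; linarith
      have h5 : (∫ z, w (x+z) ∂ν) ≤ ∫ z, wp (x+z) ∂ν :=
        integral_mono hIwx hIwpx (fun z => le_max_left _ _)
      have hwpx : wp x = w x := max_eq_left (le_of_lt hwx)
      rw [hwpx]; linarith
  -- MAIN ε-step
  have hmain : ∀ ε : ℝ, 0 < ε → ∀ᵐ x ∂vol, wp x ≤ ε := by
    intro ε hε
    obtain ⟨δ, hδ, hδε⟩ := Metric.uniformContinuousOn_iff.mp
      ((isCompact_Icc (a := -M) (b := M)).uniformContinuousOn_of_continuous hφc.continuousOn) ε hε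
    set S : Set (EN N) := {x | δ/2 ≤ u x - v x} with hS
    have hSmeas : MeasurableSet S := measurableSet_le measurable_const (hum.sub hvm)
    have hSfin : vol S < ⊤ := hint.measure_ge_lt_top (half_pos hδ)
    set g : EN N → ℝ := fun x => max (wp x - ε) 0 with hg
    have hgm : Measurable g := (hwpm.sub measurable_const).max measurable_const
    have hgnn : ∀ y, 0 ≤ g y := fun y => le_max_right _ _
    have hgle : ∀ y, g y ≤ wp y := fun y => max_le (by linarith [hwpnn y]) (hwpnn y)
    have hgS : ∀ᵐ x ∂vol, g x ≤ (2*B) * S.indicator (fun _ => (1:ℝ)) x := by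
      filter_upwards [hbdd] with x hx
      by_cases hxS : x ∈ S
      · rw [Set.indicator_of_mem hxS]
        have := hwpb x hx.1 hx.2
        have := hgle x
        linarith
      · rw [Set.indicator_of_notMem hxS, mul_zero]
        have hxlt : u x - v x < δ/2 := by
          by_contra hcc; push_neg at hcc; exact hxS hcc
        have hwpsmall : wp x ≤ ε := by
          rcases le_or_gt (u x) (v x) with hle | hlt
          · have : w x ≤ 0 := sub_nonpos.mpr (hφm hle)
            simp only [hwp]
            rw [max_eq_right this]
            linarith
          · have hd : dist (u x) (v x) < δ := by
              rw [Real.dist_eq, abs_of_pos (by linarith : (0:ℝ) < u x - v x)]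
              linarith
            have := hδε (u x) (abs_le.mp hx.1) (v x) (abs_le.mp hx.2) hd
            rw [Real.dist_eq] at this
            have hwle : w x ≤ ε := le_of_lt (lt_of_le_of_lt (le_abs_self _) this)
            exact max_le hwle (le_of_lt hε)
        have h0 : wp x - ε ≤ 0 := by linarith
        exact le_of_eq (max_eq_right h0)
    have hdom : Integrable (fun x => (2*B) * S.indicator (fun _ => (1:ℝ)) x) vol := by
      refine Integrable.const_mul ?_ (2*B)
      rw [integrable_indicator_iff hSmeas]
      exact integrableOn_const hSfin.ne
    have hgint : Integrable g vol := by
      refine hdom.mono' hgm.aestronglyMeasurable ?_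
      filter_upwards [hgS] with x hx
      rwa [Real.norm_eq_abs, abs_of_nonneg (hgnn x)]
    have hdom2 : Integrable (fun x => (2*B)^2 * S.indicator (fun _ => (1:ℝ)) x) vol := by
      refine Integrable.const_mul ?_ _
      rw [integrable_indicator_iff hSmeas]
      exact integrableOn_const hSfin.ne
    have hg2int : Integrable (fun x => g x ^ 2) vol := by
      refine hdom2.mono' (hgm.pow_const 2).aestronglyMeasurable ?_
      filter_upwards [hgS] with x hx
      rw [Real.norm_eq_abs, abs_of_nonneg (sq_nonneg _)]
      by_cases hxS : x ∈ S
      · rw [Set.indicator_of_mem hxS] at hx ⊢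
        nlinarith [hgnn x]
      · rw [Set.indicator_of_notMem hxS] at hx ⊢
        have : g x = 0 := le_antisymm (by simpa using hx) (hgnn x)
        simp [this]
    -- integrability of translates of g at good points
    have hIg : ∀ x : EN N, (∀ᵐ z ∂ν, |u (x+z)| ≤ M ∧ |v (x+z)| ≤ M) →
        Integrable (fun z => g (x+z)) ν := by
      intro x hx
      refine (integrable_const (2*B)).mono' ((hgm.comp (measurable_const_add x)).aestronglyMeasurable) ?_
      filter_upwards [hx] with z hz
      rw [Real.norm_eq_abs, abs_of_nonneg (hgnn _)]
      exact le_trans (hgle _) (hwpb _ hz.1 hz.2)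
    -- subharmonicity of g
    have hgP : ∀ᵐ x ∂vol, νR * g x ≤ ∫ z, g (x+z) ∂ν := by
      filter_upwards [hii, hgood] with x hx hgd
      obtain ⟨_, hxz, _⟩ := hgd
      obtain ⟨hIwx, hIwpx⟩ := hIw x hxz
      have hIgx : Integrable (fun z => g (x+z)) ν := hIg x hxz
      have h2 : (0:ℝ) ≤ ∫ z, g (x+z) ∂ν := integral_nonneg (fun z => hgnn _)
      have h1 : νR * wp x - νR * ε ≤ ∫ z, g (x+z) ∂ν := by
        have e1 : (∫ z, (wp (x+z) - ε) ∂ν) = (∫ z, wp (x+z) ∂ν) - νR * ε := by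
          rw [integral_sub hIwpx (integrable_const _), integral_const, measureReal_def, smul_eq_mul, mul_comm]
        have e2 : (∫ z, (wp (x+z) - ε) ∂ν) ≤ ∫ z, g (x+z) ∂ν :=
          integral_mono (hIwpx.sub (integrable_const _)) hIgx (fun z => le_max_left _ _)
        linarith
      have : νR * g x = max (νR * wp x - νR * ε) 0 := by
        rw [hg]
        simp only []
        rw [mul_max_of_nonneg _ _ (le_of_lt hνRpos), mul_zero, mul_sub]
      rw [this]
      exact max_le h1 h2
    set Jg : EN N → ℝ := fun x => ∫ z, g (x + z) ∂ν with hJg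
    have hJgsm : StronglyMeasurable Jg :=
      (hgm.stronglyMeasurable.comp_measurable (measurable_fst.add measurable_snd)).integral_prod_right'
    have hJgb : ∀ᵐ x ∂vol, Jg x ≤ νR * (2*B) ∧ 0 ≤ Jg x := by
      filter_upwards [hgood] with x hgd
      obtain ⟨_, hxz, _⟩ := hgd
      constructor
      · have hb : ∀ᵐ z ∂ν, g (x+z) ≤ 2*B := by
          filter_upwards [hxz] with z hz
          exact le_trans (hgle _) (hwpb _ hz.1 hz.2)
        have := integral_mono_ae (hIg x hxz) (integrable_const (2*B)) hb
        rw [integral_const, smul_eq_mul] at this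
        exact this
      · exact integral_nonneg (fun z => hgnn _)
    have hgJg_int : Integrable (fun x => g x * Jg x) vol := by
      refine (hgint.mul_const (νR * (2*B))).mono'
        (hgm.aestronglyMeasurable.mul hJgsm.aestronglyMeasurable) ?_
      filter_upwards [hJgb] with x hx
      rw [Real.norm_eq_abs, abs_of_nonneg (mul_nonneg (hgnn x) hx.2)]
      exact mul_le_mul_of_nonneg_left hx.1 (hgnn x)
    have hstep1 : νR * ∫ x, g x ^ 2 ∂vol ≤ ∫ x, g x * Jg x ∂vol := by
      have e : (∫ x, νR * g x ^ 2 ∂vol) = νR * ∫ x, g x ^ 2 ∂vol := integral_const_mul νR _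
      rw [← e]
      refine integral_mono_ae (hg2int.const_mul νR) hgJg_int ?_
      filter_upwards [hgP] with x hx
      calc νR * g x ^ 2 = g x * (νR * g x) := by ring
      _ ≤ g x * Jg x := mul_le_mul_of_nonneg_left hx (hgnn x)
    -- Fubini
    have hFsm : StronglyMeasurable (fun p : EN N × EN N => g p.1 * g (p.1 + p.2)) :=
      ((hgm.comp measurable_fst).mul (hgm.comp (measurable_fst.add measurable_snd))).stronglyMeasurable
    have hFint : Integrable (fun p : EN N × EN N => g p.1 * g (p.1 + p.2)) (vol.prod ν) := by
      rw [integrable_prod_iff hFsm.aestronglyMeasurable]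
      constructor
      · filter_upwards [hgood] with x hgd
        obtain ⟨_, hxz, _⟩ := hgd
        exact (hIg x hxz).const_mul (g x)
      · refine hgJg_int.congr ?_
        refine Filter.Eventually.of_forall (fun x => ?_)
        have e0 : (∫ z, ‖g x * g (x + z)‖ ∂ν) = ∫ z, g x * g (x + z) ∂ν :=
          integral_congr_ae (Filter.Eventually.of_forall (fun z => by
            show ‖g x * g (x + z)‖ = g x * g (x + z)
            rw [Real.norm_eq_abs, abs_of_nonneg (mul_nonneg (hgnn x) (hgnn _))]))
        show g x * Jg x = ∫ z, ‖g x * g (x + z)‖ ∂ν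
        rw [e0, integral_const_mul]
    have hswap : ∫ x, (∫ z, g x * g (x + z) ∂ν) ∂vol = ∫ z, (∫ x, g x * g (x + z) ∂vol) ∂ν :=
      integral_integral_swap hFint
    have heq1 : ∫ x, g x * Jg x ∂vol = ∫ x, (∫ z, g x * g (x + z) ∂ν) ∂vol := by
      refine integral_congr_ae (Filter.Eventually.of_forall (fun x => ?_))
      show g x * Jg x = ∫ z, g x * g (x + z) ∂ν
      rw [integral_const_mul]
    -- per z analysis
    have htr : ∀ z : EN N, Integrable (fun x => g (x+z) ^ 2) vol := by
      intro z
      exact ((measurePreserving_add_right vol z).integrable_comp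
        (hgm.pow_const 2).aestronglyMeasurable).mpr hg2int
    have htr1 : ∀ z : EN N, Integrable (fun x => g x * g (x+z)) vol := by
      intro z
      refine ((hg2int.add (htr z)).const_mul (1/2)).mono'
        (hgm.aestronglyMeasurable.mul ((hgm.comp (measurable_add_const z)).aestronglyMeasurable)) ?_
      refine Filter.Eventually.of_forall (fun x => ?_)
      rw [Real.norm_eq_abs, abs_of_nonneg (mul_nonneg (hgnn x) (hgnn _))]
      simp only [Pi.add_apply]
      nlinarith [sq_nonneg (g x - g (x+z)), hgnn x, hgnn (x+z)]
    have hd2 : ∀ z : EN N, Integrable (fun x => (g x - g (x+z))^2) vol := by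
      intro z
      have he : (fun x => (g x - g (x+z))^2) = fun x => g x^2 + g (x+z)^2 - 2*(g x * g (x+z)) := by
        funext x; ring
      rw [he]
      exact (hg2int.add (htr z)).sub ((htr1 z).const_mul 2)
    set q : EN N → ℝ := fun z => ∫ x, (g x - g (x+z))^2 ∂vol with hqdef
    have hq_nn : ∀ z, 0 ≤ q z := fun z => integral_nonneg (fun x => sq_nonneg _)
    have hq_eq : ∀ z : EN N, ∫ x, g x * g (x+z) ∂vol = (∫ x, g x^2 ∂vol) - q z / 2 := by
      intro z
      have e1 : (∫ x, g (x+z)^2 ∂vol) = ∫ x, g x^2 ∂vol := integral_add_right_eq_self (fun y => g y ^ 2) z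
      have e2 : q z = (∫ x, g x^2 ∂vol) + (∫ x, g (x+z)^2 ∂vol) - 2*(∫ x, g x * g (x+z) ∂vol) := by
        rw [hqdef]
        simp only []
        have he : (fun x => (g x - g (x+z))^2) = fun x => g x^2 + g (x+z)^2 - 2*(g x * g (x+z)) := by
          funext x; ring
        have haddz : Integrable (fun x => g x ^ 2 + g (x+z) ^ 2) vol := hg2int.add (htr z)
        rw [he, integral_sub haddz ((htr1 z).const_mul 2),
          integral_add hg2int (htr z), integral_const_mul]
      rw [e1] at e2
      linarith
    have hq_sm : StronglyMeasurable q := by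
      have : StronglyMeasurable (fun p : EN N × EN N => (g p.1 - g (p.1 + p.2))^2) :=
        (((hgm.comp measurable_fst).sub (hgm.comp (measurable_fst.add measurable_snd))).pow_const 2).stronglyMeasurable
      exact this.integral_prod_left'
    have hq_int : Integrable q ν := by
      refine (integrable_const (4 * ∫ x, g x^2 ∂vol)).mono' hq_sm.aestronglyMeasurable ?_
      refine Filter.Eventually.of_forall (fun z => ?_)
      rw [Real.norm_eq_abs, abs_of_nonneg (hq_nn z)]
      have e1 : (∫ x, g (x+z)^2 ∂vol) = ∫ x, g x^2 ∂vol := integral_add_right_eq_self (fun y => g y ^ 2) z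
      have : q z ≤ ∫ x, (2 * g x^2 + 2 * g (x+z)^2) ∂vol := by
        refine integral_mono (hd2 z) (((hg2int.const_mul 2)).add ((htr z).const_mul 2)) ?_
        intro x
        show (g x - g (x+z))^2 ≤ 2 * g x^2 + 2 * g (x+z)^2
        nlinarith [sq_nonneg (g x + g (x+z))]
      rw [integral_add (hg2int.const_mul 2) ((htr z).const_mul 2), integral_const_mul,
        integral_const_mul, e1] at this
      linarith
    -- the chain
    have hchain : νR * (∫ x, g x^2 ∂vol) ≤ νR * (∫ x, g x^2 ∂vol) - (1/2) * ∫ z, q z ∂ν := by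
      have c1 : ∫ z, (∫ x, g x * g (x+z) ∂vol) ∂ν
          = ∫ z, ((∫ x, g x^2 ∂vol) - q z / 2) ∂ν :=
        integral_congr_ae (Filter.Eventually.of_forall (fun z => hq_eq z))
      have c2 : ∫ z, ((∫ x, g x^2 ∂vol) - q z / 2) ∂ν
          = νR * (∫ x, g x^2 ∂vol) - (1/2) * ∫ z, q z ∂ν := by
        rw [integral_sub (integrable_const _) (hq_int.div_const 2), integral_const, measureReal_def,
          smul_eq_mul, mul_comm, integral_div]
        ring
      calc νR * (∫ x, g x^2 ∂vol) ≤ ∫ x, g x * Jg x ∂vol := hstep1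
      _ = ∫ z, (∫ x, g x * g (x+z) ∂vol) ∂ν := by rw [heq1, hswap]
      _ = νR * (∫ x, g x^2 ∂vol) - (1/2) * ∫ z, q z ∂ν := by rw [c1, c2]
    have hqint0 : ∫ z, q z ∂ν ≤ 0 := by linarith
    have hqae : ∀ᵐ z ∂ν, q z = 0 :=
      (integral_eq_zero_iff_of_nonneg hq_nn hq_int).mp
        (le_antisymm hqint0 (integral_nonneg hq_nn))
    -- pick z₀ ≠ 0 with q z₀ = 0
    have hex : ∃ z₀ : EN N, z₀ ≠ 0 ∧ q z₀ = 0 := by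
      by_contra hcon
      push_neg at hcon
      have hsub : {(0:EN N)}ᶜ ⊆ {z | ¬ q z = 0} := by
        intro z hz
        exact hcon z hz
      have : ν {z | ¬ q z = 0} = 0 := hqae
      exact absurd (measure_mono_null hsub this) hν0
    obtain ⟨z₀, hz₀ne, hz₀q⟩ := hex
    have hinv : (fun x => g x) =ᵐ[vol] fun x => g (x + z₀) := by
      have h0 : (fun x => (g x - g (x + z₀))^2) =ᵐ[vol] 0 :=
        (integral_eq_zero_iff_of_nonneg (fun x => sq_nonneg _) (hd2 z₀)).mp hz₀q
      filter_upwards [h0] with x hx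
      have : (g x - g (x + z₀))^2 = 0 := hx
      have := pow_eq_zero_iff (n := 2) (by norm_num) |>.mp this
      linarith [sub_eq_zero.mp this]
    -- iterate the invariance
    have hinvh : ∀ n : ℕ, (fun x => g x ^ 2) =ᵐ[vol] fun x => g (x + n • z₀) ^ 2 := by
      intro n
      induction n with
      | zero => simp
      | succ n ih =>
        have hqmp := (measurePreserving_add_right vol (n • z₀)).quasiMeasurePreserving
        have h1 : (fun x => g (x + n • z₀)) =ᵐ[vol] fun x => g (x + n • z₀ + z₀) :=
          hqmp.ae_eq_comp hinv
        have h2 : (fun x => g (x + n • z₀) ^ 2) =ᵐ[vol] fun x => g (x + n • z₀ + z₀) ^ 2 := by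
          filter_upwards [h1] with x hx
          rw [hx]
        refine ih.trans (h2.trans ?_)
        refine Filter.Eventually.of_forall (fun x => ?_)
        show g (x + n • z₀ + z₀) ^ 2 = g (x + (n+1) • z₀) ^ 2
        rw [succ_nsmul, ← add_assoc]
    -- geometric argument: ∫ g² = 0
    have hI0 : ∫ x, g x ^ 2 ∂vol = 0 := by
      by_contra hcon
      have hIpos : 0 < ∫ x, g x ^ 2 ∂vol :=
        (integral_nonneg (fun x => sq_nonneg _)).lt_of_ne (Ne.symm hcon)
      have htend : Filter.Tendsto (fun n : ℕ => ∫ x in Metric.closedBall 0 n, g x ^2 ∂vol)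
          Filter.atTop (nhds (∫ x, g x ^2 ∂vol)) := by
        have := MeasureTheory.tendsto_setIntegral_of_monotone (μ := vol)
          (s := fun n : ℕ => Metric.closedBall 0 n) (f := fun x => g x ^2)
          (fun n => measurableSet_closedBall)
          (fun m n hmn => Metric.closedBall_subset_closedBall (by exact_mod_cast hmn))
          (by rw [Metric.iUnion_closedBall_nat]; exact hg2int.integrableOn)
        rwa [Metric.iUnion_closedBall_nat, setIntegral_univ] at this
      obtain ⟨R, hR⟩ := (htend.eventually (lt_mem_nhds (half_lt_self hIpos))).exists
      have hz₀norm : 0 < ‖z₀‖ := norm_pos_iff.mpr hz₀ne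
      obtain ⟨n, hn⟩ := exists_nat_gt ((2*(R:ℝ)+1)/‖z₀‖)
      have hnz : 2*(R:ℝ)+1 < ‖n • z₀‖ := by
        have hns : ‖n • z₀‖ = (n:ℝ) * ‖z₀‖ := by
          rw [← Nat.cast_smul_eq_nsmul (R := ℝ), norm_smul, Real.norm_natCast]
        rw [hns]
        rw [div_lt_iff₀ hz₀norm] at hn
        linarith
      set A : Set (EN N) := Metric.closedBall 0 R with hA
      set A' : Set (EN N) := (fun x => x + n • z₀) ⁻¹' A with hA'
      have hA'meas : MeasurableSet A' := (measurable_add_const _) measurableSet_closedBall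
      have hdisj : Disjoint A A' := by
        rw [Set.disjoint_left]
        intro x hx1 hx2
        rw [hA, Metric.mem_closedBall, dist_zero_right] at hx1
        rw [hA', Set.mem_preimage, hA, Metric.mem_closedBall, dist_zero_right] at hx2
        have : ‖n • z₀‖ ≤ ‖x + n • z₀‖ + ‖x‖ := by
          calc ‖n • z₀‖ = ‖(x + n • z₀) - x‖ := by rw [add_sub_cancel_left]
          _ ≤ ‖x + n • z₀‖ + ‖x‖ := norm_sub_le _ _
        linarith
      have hA'val : ∫ x in A', g x ^2 ∂vol = ∫ x in A, g x ^2 ∂vol := by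
        have s1 : ∫ x in A', g x ^2 ∂vol = ∫ x in A', g (x + n • z₀) ^2 ∂vol :=
          integral_congr_ae (ae_restrict_of_ae (hinvh n))
        have s2 : ∫ x in (fun x => x + n • z₀) ⁻¹' A, g (x + n • z₀) ^2 ∂vol = ∫ y in A, g y ^2 ∂vol :=
          (measurePreserving_add_right vol (n • z₀)).setIntegral_preimage_emb
            (MeasurableEquiv.addRight (n • z₀)).measurableEmbedding (fun y => g y ^ 2) A
        rw [s1]
        exact s2
      have hunion : ∫ x in A ∪ A', g x ^2 ∂vol = (∫ x in A, g x ^2 ∂vol) + ∫ x in A', g x ^2 ∂vol :=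
        setIntegral_union hdisj hA'meas hg2int.integrableOn hg2int.integrableOn
      have hle : ∫ x in A ∪ A', g x ^2 ∂vol ≤ ∫ x, g x ^2 ∂vol :=
        setIntegral_le_integral hg2int (Filter.Eventually.of_forall (fun x => sq_nonneg _))
      rw [hunion, hA'val] at hle
      linarith
    have hg0 : ∀ᵐ x ∂vol, g x = 0 := by
      have := (integral_eq_zero_iff_of_nonneg (fun x => sq_nonneg (g x)) hg2int).mp hI0
      filter_upwards [this] with x hx
      have : g x ^ 2 = 0 := hx
      have := pow_eq_zero_iff (n := 2) (by norm_num) |>.mp this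
      exact this
    filter_upwards [hg0] with x hx
    by_contra hcc
    push_neg at hcc
    have : g x = wp x - ε := max_eq_left (by linarith)
    rw [hx] at this
    linarith
  -- conclude wp = 0 a.e.
  have hwp0 : ∀ᵐ x ∂vol, wp x = 0 := by
    have hall : ∀ᵐ x ∂vol, ∀ n : ℕ, wp x ≤ 1/(n+1) := by
      rw [ae_all_iff]
      intro n
      exact hmain _ (by positivity)
    filter_upwards [hall] with x hx
    refine le_antisymm ?_ (hwpnn x)
    by_contra hcon
    push_neg at hcon
    obtain ⟨n, hn⟩ := exists_nat_one_div_lt hcon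
    exact absurd (hx n) (not_le.mpr (by exact_mod_cast hn))
  -- final conclusion
  filter_upwards [hgood, hwp0, ae_ae_add ν hwp0] with x ⟨⟨hxu, hxv⟩, hxz, hxH⟩ hx0 hxz0
  by_contra hcon
  push_neg at hcon
  have hwx : w x = 0 := by
    have h1 : 0 ≤ w x := sub_nonneg.mpr (hφm (le_of_lt hcon))
    have := hx0
    simp only [hwp, max_eq_left h1] at this
    exact this
  have hneg : (∫ z, (w (x+z) - w x) ∂ν) ≤ 0 := by
    refine integral_nonpos_of_ae ?_
    filter_upwards [hxz0] with z hz
    have : w (x+z) ≤ 0 := by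
      have := hz
      by_contra hcc
      push_neg at hcc
      simp [hwp, max_eq_left (le_of_lt hcc)] at hz
      linarith
    show w (x+z) - w x ≤ 0
    rw [hwx]; linarith
  have := hxH
  nlinarith [mul_nonpos_of_nonneg_of_nonpos hc hneg]


/-- Congruence of `Lnu` integrals under a.e. modification. -/
lemma lnu_congr (ν : Measure (EN N)) [IsFiniteMeasure ν] {A B : EN N → ℝ}
    (h : A =ᵐ[(volume : Measure (EN N))] B) :
    ∀ᵐ x ∂(volume : Measure (EN N)),
      (∫ z, (A (x + z) - A x) ∂ν) = ∫ z, (B (x + z) - B x) ∂ν := by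
  filter_upwards [ae_ae_add ν h, h] with x hx hx2
  refine integral_congr_ae ?_
  filter_upwards [hx] with z hz
  rw [hz, hx2]

/-- A.e. bound from `Memℒp ∞`. -/
lemma memtop_bound {f : EN N → ℝ} (h : MemLp f ⊤ (volume : Measure (EN N))) :
    ∃ C : ℝ, 0 ≤ C ∧ ∀ᵐ x ∂(volume : Measure (EN N)), |f x| ≤ C := by
  refine ⟨(eLpNormEssSup f volume).toReal, ENNReal.toReal_nonneg, ?_⟩
  filter_upwards [ae_le_eLpNormEssSup (f := f) (μ := (volume : Measure (EN N)))] with x hx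
  have hlt : eLpNormEssSup f volume < ⊤ := by
    have := h.2
    rwa [eLpNorm_exponent_top] at this
  calc |f x| = ((‖f x‖₊ : ENNReal)).toReal := by simp [Real.norm_eq_abs]
  _ ≤ (eLpNormEssSup f volume).toReal := ENNReal.toReal_mono hlt.ne hx

/-- A.e. integrability in time of the source. -/
lemma source_int {f : EN N → ℝ → ℝ} (hf : Measurable (Function.uncurry f)) {T : ℝ}
    (hfin : ∫⁻ τ in Set.Ioc 0 T, eLpNorm (fun x => f x τ) 1 (volume : Measure (EN N)) < ⊤) :
    ∀ᵐ x ∂(volume : Measure (EN N)), IntegrableOn (fun τ => f x τ) (Set.Ioc 0 T) volume := by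
  have hm : AEMeasurable (fun p : EN N × ℝ => (‖f p.1 p.2‖₊ : ENNReal))
      ((volume : Measure (EN N)).prod ((volume : Measure ℝ).restrict (Set.Ioc 0 T))) :=
    (hf.enorm).aemeasurable
  have hswap : ∫⁻ x, (∫⁻ τ in Set.Ioc 0 T, (‖f x τ‖₊ : ENNReal)) ∂(volume : Measure (EN N))
      = ∫⁻ τ in Set.Ioc 0 T, (∫⁻ x, (‖f x τ‖₊ : ENNReal) ∂(volume : Measure (EN N))) :=
    lintegral_lintegral_swap hm
  have hfin' : ∫⁻ x, (∫⁻ τ in Set.Ioc 0 T, (‖f x τ‖₊ : ENNReal)) ∂(volume : Measure (EN N)) < ⊤ := by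
    rw [hswap]
    refine lt_of_le_of_lt (le_of_eq ?_) hfin
    refine lintegral_congr_ae (Filter.Eventually.of_forall (fun τ => ?_))
    show (∫⁻ x, (‖f x τ‖₊ : ENNReal) ∂(volume : Measure (EN N))) = eLpNorm (fun x => f x τ) 1 volume
    rw [eLpNorm_one_eq_lintegral_enorm]
    rfl
  have hae := ae_lt_top (Measurable.lintegral_prod_right' hf.enorm) hfin'.ne
  filter_upwards [hae] with x hx
  refine ⟨(hf.of_uncurry_left).aestronglyMeasurable, ?_⟩
  simpa [HasFiniteIntegral] using hx

set_option maxHeartbeats 2000000 in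
theorem stmt12 {N : ℕ} (hN : 1 ≤ N)
    (T : ℝ) (hT : 0 < T) (J : ℕ) (hJ : 1 ≤ J)
    (t : ℕ → ℝ) (ht0 : t 0 = 0) (htJ : t J = T)
    (htmono : ∀ j < J, t j < t (j + 1))
    (u₀ v₀ : EuclideanSpace ℝ (Fin N) → ℝ)
    (hu₀1 : Integrable u₀ volume) (hu₀inf : MemLp u₀ ∞ volume)
    (hv₀1 : Integrable v₀ volume) (hv₀inf : MemLp v₀ ∞ volume)
    (f g : EuclideanSpace ℝ (Fin N) → ℝ → ℝ)
    (hfmeas : Measurable (Function.uncurry f))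
    (hgmeas : Measurable (Function.uncurry g))
    (hfint : ∫⁻ τ in Set.Ioc 0 T,
        (eLpNorm (fun x => f x τ) 1 volume + eLpNorm (fun x => f x τ) ∞ volume) < ∞)
    (hgint : ∫⁻ τ in Set.Ioc 0 T,
        (eLpNorm (fun x => g x τ) 1 volume + eLpNorm (fun x => g x τ) ∞ volume) < ∞)
    (ν₁ ν₂ : Measure (EuclideanSpace ℝ (Fin N)))
    [IsFiniteMeasure ν₁] [IsFiniteMeasure ν₂]
    (hsym₁ : ν₁.map (fun z => -z) = ν₁) (hsym₂ : ν₂.map (fun z => -z) = ν₂)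
    (φ₁ φ₂ : ℝ → ℝ)
    (hφ₁cont : Continuous φ₁) (hφ₁mono : Monotone φ₁) (hφ₁0 : φ₁ 0 = 0)
    (L : ℝ≥0) (hφ₂lip : LipschitzWith L φ₂) (hφ₂mono : Monotone φ₂) (hφ₂0 : φ₂ 0 = 0)
    (hCFL : ∀ j, 1 ≤ j → j ≤ J →
      ENNReal.ofReal (t j - t (j - 1)) * (L : ℝ≥0∞) * ν₂ Set.univ ≤ 1)
    (U V : ℕ → EuclideanSpace ℝ (Fin N) → ℝ)
    (hU : IsSchemeSol ν₁ ν₂ φ₁ φ₂ t J u₀ f U)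
    (hV : IsSchemeSol ν₁ ν₂ φ₁ φ₂ t J v₀ g V)
    (hdata0 : ∀ᵐ x ∂(volume : Measure (EuclideanSpace ℝ (Fin N))), u₀ x ≤ v₀ x)
    (hdataf : ∀ᵐ p ∂((volume : Measure (EuclideanSpace ℝ (Fin N))).prod
        ((volume : Measure ℝ).restrict (Set.Ioo 0 T))), f p.1 p.2 ≤ g p.1 p.2) :
    ∀ j ≤ J, ∀ᵐ x ∂(volume : Measure (EuclideanSpace ℝ (Fin N))), U j x ≤ V j x := by
  classical
  obtain ⟨hU1, hU0, hUstep⟩ := hU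
  obtain ⟨hV1, hV0, hVstep⟩ := hV
  set vol : Measure (EN N) := volume with hvol
  -- monotonicity of the time grid
  have tmono : ∀ k, k ≤ J → ∀ i, i ≤ k → t i ≤ t k := by
    intro k
    induction k with
    | zero =>
      intro _ i hi
      rw [Nat.le_zero.mp hi]
    | succ k ih =>
      intro hk i hi
      rcases Nat.le_succ_iff.mp hi with h | h
      · calc t i ≤ t k := ih (by omega) i h
        _ ≤ t (k+1) := le_of_lt (htmono k (by omega))
      · rw [h]
  -- integrability of sources in time
  have hfInt : ∀ᵐ x ∂vol, IntegrableOn (fun τ => f x τ) (Set.Ioc 0 T) volume :=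
    source_int hfmeas (lt_of_le_of_lt (lintegral_mono fun τ => le_self_add) hfint)
  have hgInt : ∀ᵐ x ∂vol, IntegrableOn (fun τ => g x τ) (Set.Ioc 0 T) volume :=
    source_int hgmeas (lt_of_le_of_lt (lintegral_mono fun τ => le_self_add) hgint)
  -- comparison of sources
  have hcmp : ∀ᵐ x ∂vol, ∀ᵐ τ ∂((volume : Measure ℝ).restrict (Set.Ioc 0 T)), f x τ ≤ g x τ := by
    have h0 := Measure.ae_ae_of_ae_prod hdataf
    have he : (volume : Measure ℝ).restrict (Set.Ioo 0 T)
        = (volume : Measure ℝ).restrict (Set.Ioc 0 T) :=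
      Measure.restrict_congr_set Ioo_ae_eq_Ioc
    rwa [he] at h0
  intro j
  induction j with
  | zero =>
    intro _
    filter_upwards [hU0, hV0, hdata0] with x h1 h2 h3
    rw [h1, h2]; exact h3
  | succ j ih =>
    intro hj
    have hjJ : j ≤ J := by omega
    have IH := ih hjJ
    set Δ : ℝ := t (j+1) - t j with hΔdef
    have hΔ : 0 < Δ := sub_pos.mpr (htmono j (by omega))
    -- data of the four functions
    obtain ⟨hUj1i, hUj1p⟩ := hU1 (j+1) hj
    obtain ⟨hVj1i, hVj1p⟩ := hV1 (j+1) hj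
    obtain ⟨hUji, hUjp⟩ := hU1 j hjJ
    obtain ⟨hVji, hVjp⟩ := hV1 j hjJ
    obtain ⟨Cu, hCu0, hCu⟩ := memtop_bound hUj1p
    obtain ⟨Cv, hCv0, hCv⟩ := memtop_bound hVj1p
    obtain ⟨Cu', hCu0', hCu'⟩ := memtop_bound hUjp
    obtain ⟨Cv', hCv0', hCv'⟩ := memtop_bound hVjp
    set M : ℝ := max Cu Cv with hM
    set M' : ℝ := max Cu' Cv' with hM'
    -- measurable representatives
    obtain ⟨a, ham, haeq⟩ : ∃ a, StronglyMeasurable a ∧ U (j+1) =ᵐ[vol] a :=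
      ⟨hUj1i.aestronglyMeasurable.mk _, hUj1i.aestronglyMeasurable.stronglyMeasurable_mk,
        hUj1i.aestronglyMeasurable.ae_eq_mk⟩
    obtain ⟨b, hbm, hbeq⟩ : ∃ b, StronglyMeasurable b ∧ V (j+1) =ᵐ[vol] b :=
      ⟨hVj1i.aestronglyMeasurable.mk _, hVj1i.aestronglyMeasurable.stronglyMeasurable_mk,
        hVj1i.aestronglyMeasurable.ae_eq_mk⟩
    obtain ⟨a', ham', haeq'⟩ : ∃ a', StronglyMeasurable a' ∧ U j =ᵐ[vol] a' :=
      ⟨hUji.aestronglyMeasurable.mk _, hUji.aestronglyMeasurable.stronglyMeasurable_mk,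
        hUji.aestronglyMeasurable.ae_eq_mk⟩
    obtain ⟨b', hbm', hbeq'⟩ : ∃ b', StronglyMeasurable b' ∧ V j =ᵐ[vol] b' :=
      ⟨hVji.aestronglyMeasurable.mk _, hVji.aestronglyMeasurable.stronglyMeasurable_mk,
        hVji.aestronglyMeasurable.ae_eq_mk⟩
    have hab : ∀ᵐ x ∂vol, |a x| ≤ M := by
      filter_upwards [hCu, haeq] with x h1 h2
      rw [← h2]; exact le_trans h1 (le_max_left _ _)
    have hbb : ∀ᵐ x ∂vol, |b x| ≤ M := by
      filter_upwards [hCv, hbeq] with x h1 h2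
      rw [← h2]; exact le_trans h1 (le_max_right _ _)
    have hab' : ∀ᵐ x ∂vol, |a' x| ≤ M' := by
      filter_upwards [hCu', haeq'] with x h1 h2
      rw [← h2]; exact le_trans h1 (le_max_left _ _)
    have hbb' : ∀ᵐ x ∂vol, |b' x| ≤ M' := by
      filter_upwards [hCv', hbeq'] with x h1 h2
      rw [← h2]; exact le_trans h1 (le_max_right _ _)
    have IH' : ∀ᵐ x ∂vol, a' x ≤ b' x := by
      filter_upwards [IH, haeq', hbeq'] with x h1 h2 h3
      rw [← h2, ← h3]; exact h1
    -- CFL in real form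
    have hν₂R0 : (0:ℝ) ≤ (ν₂ Set.univ).toReal := ENNReal.toReal_nonneg
    have hCFLr : Δ * (L:ℝ) * (ν₂ Set.univ).toReal ≤ 1 := by
      have h := hCFL (j+1) (by omega) hj
      simp only [Nat.add_sub_cancel] at h
      have h2 := ENNReal.toReal_mono (by simp) h
      rw [ENNReal.toReal_mul, ENNReal.toReal_mul, ENNReal.toReal_ofReal hΔ.le] at h2
      simpa using h2
    -- transfer the scheme equations to the representatives
    have hsU := hUstep (j+1) (by omega) hj
    have hsV := hVstep (j+1) (by omega) hj
    simp only [Nat.add_sub_cancel, Lnu] at hsU hsV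
    have hLaeq : (fun y => φ₁ (U (j+1) y)) =ᵐ[vol] fun y => φ₁ (a y) := by
      filter_upwards [haeq] with y hy; rw [hy]
    have hLbeq : (fun y => φ₁ (V (j+1) y)) =ᵐ[vol] fun y => φ₁ (b y) := by
      filter_upwards [hbeq] with y hy; rw [hy]
    have hLaeq' : (fun y => φ₂ (U j y)) =ᵐ[vol] fun y => φ₂ (a' y) := by
      filter_upwards [haeq'] with y hy; rw [hy]
    have hLbeq' : (fun y => φ₂ (V j y)) =ᵐ[vol] fun y => φ₂ (b' y) := by
      filter_upwards [hbeq'] with y hy; rw [hy]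
    have hEqU : ∀ᵐ x ∂vol, a x = a' x + Δ *
        ((∫ z, (φ₁ (a (x+z)) - φ₁ (a x)) ∂ν₁) + (∫ z, (φ₂ (a' (x+z)) - φ₂ (a' x)) ∂ν₂) +
          Favg t f (j+1) x) := by
      filter_upwards [hsU, haeq, haeq', lnu_congr ν₁ hLaeq, lnu_congr ν₂ hLaeq'] with x hx h1 h2 h3 h4
      rw [← h3, ← h4, ← h1, ← h2]
      exact hx
    have hEqV : ∀ᵐ x ∂vol, b x = b' x + Δ *
        ((∫ z, (φ₁ (b (x+z)) - φ₁ (b x)) ∂ν₁) + (∫ z, (φ₂ (b' (x+z)) - φ₂ (b' x)) ∂ν₂) +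
          Favg t g (j+1) x) := by
      filter_upwards [hsV, hbeq, hbeq', lnu_congr ν₁ hLbeq, lnu_congr ν₂ hLbeq'] with x hx h1 h2 h3 h4
      rw [← h3, ← h4, ← h1, ← h2]
      exact hx
    -- comparison of the averaged sources
    have hFavg : ∀ᵐ x ∂vol, Favg t f (j+1) x ≤ Favg t g (j+1) x := by
      have hsub : Set.Ioc (t j) (t (j+1)) ⊆ Set.Ioc 0 T :=
        Set.Ioc_subset_Ioc (ht0 ▸ tmono j hjJ 0 (Nat.zero_le j)) (htJ ▸ tmono J le_rfl (j+1) hj)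
      filter_upwards [hfInt, hgInt, hcmp] with x hfx hgx hcx
      have hfx' : IntegrableOn (fun τ => f x τ) (Set.Ioc (t j) (t (j+1))) volume :=
        hfx.mono_set hsub
      have hgx' : IntegrableOn (fun τ => g x τ) (Set.Ioc (t j) (t (j+1))) volume :=
        hgx.mono_set hsub
      have hcx' : ∀ᵐ τ ∂((volume : Measure ℝ).restrict (Set.Ioc (t j) (t (j+1)))), f x τ ≤ g x τ :=
        ae_restrict_of_ae_restrict_of_subset hsub hcx
      have hmono := integral_mono_ae hfx' hgx' hcx'
      show (t (j+1) - t (j+1-1))⁻¹ * ∫ τ in Set.Ioc (t (j+1-1)) (t (j+1)), f x τ ≤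
        (t (j+1) - t (j+1-1))⁻¹ * ∫ τ in Set.Ioc (t (j+1-1)) (t (j+1)), g x τ
      simp only [Nat.add_sub_cancel]
      exact mul_le_mul_of_nonneg_left hmono (inv_nonneg.mpr hΔ.le)
    -- integrability of the ν₂-integrands (at good points)
    have hb2 : ∀ s : ℝ, |s| ≤ M' → |φ₂ s| ≤ (L:ℝ) * M' := by
      intro s hs
      have := hφ₂lip.dist_le_mul s 0
      rw [hφ₂0, Real.dist_eq, Real.dist_eq, sub_zero, sub_zero] at this
      calc |φ₂ s| ≤ (L:ℝ) * |s| := this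
      _ ≤ (L:ℝ) * M' := mul_le_mul_of_nonneg_left hs L.2
    have hgood2 : ∀ᵐ x ∂vol, (∀ᵐ z ∂ν₂, (|a' (x+z)| ≤ M' ∧ |b' (x+z)| ≤ M') ∧ a' (x+z) ≤ b' (x+z)) :=
      ae_ae_add ν₂ ((hab'.and hbb').and IH')
    -- explicit part comparison
    have hexp : ∀ᵐ x ∂vol, a' x + Δ * (∫ z, (φ₂ (a' (x+z)) - φ₂ (a' x)) ∂ν₂) + Δ * Favg t f (j+1) x
        ≤ b' x + Δ * (∫ z, (φ₂ (b' (x+z)) - φ₂ (b' x)) ∂ν₂) + Δ * Favg t g (j+1) x := by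
      filter_upwards [hgood2, hab', hbb', IH', hFavg] with x hz hau hbu hIHx hFx
      have hma : Measurable a' := ham'.measurable
      have hmb : Measurable b' := hbm'.measurable
      have hIa : Integrable (fun z => φ₂ (a' (x+z))) ν₂ := by
        refine (integrable_const ((L:ℝ) * M')).mono'
          ((hφ₂lip.continuous.measurable.comp (hma.comp (measurable_const_add x))).aestronglyMeasurable) ?_
        filter_upwards [hz] with z hzz
        rw [Real.norm_eq_abs]
        exact hb2 _ hzz.1.1
      have hIb : Integrable (fun z => φ₂ (b' (x+z))) ν₂ := by
        refine (integrable_const ((L:ℝ) * M')).mono'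
          ((hφ₂lip.continuous.measurable.comp (hmb.comp (measurable_const_add x))).aestronglyMeasurable) ?_
        filter_upwards [hz] with z hzz
        rw [Real.norm_eq_abs]
        exact hb2 _ hzz.1.2
      have e_a : (∫ z, (φ₂ (a' (x+z)) - φ₂ (a' x)) ∂ν₂)
          = (∫ z, φ₂ (a' (x+z)) ∂ν₂) - (ν₂ Set.univ).toReal * φ₂ (a' x) := by
        rw [integral_sub hIa (integrable_const _), integral_const, measureReal_def, smul_eq_mul, mul_comm]
      have e_b : (∫ z, (φ₂ (b' (x+z)) - φ₂ (b' x)) ∂ν₂)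
          = (∫ z, φ₂ (b' (x+z)) ∂ν₂) - (ν₂ Set.univ).toReal * φ₂ (b' x) := by
        rw [integral_sub hIb (integrable_const _), integral_const, measureReal_def, smul_eq_mul, mul_comm]
      have s2 : (∫ z, φ₂ (a' (x+z)) ∂ν₂) ≤ ∫ z, φ₂ (b' (x+z)) ∂ν₂ := by
        refine integral_mono_ae hIa hIb ?_
        filter_upwards [hz] with z hzz
        exact hφ₂mono hzz.2
      have hlips : φ₂ (b' x) - φ₂ (a' x) ≤ (L:ℝ) * (b' x - a' x) := by
        have hd := hφ₂lip.dist_le_mul (b' x) (a' x)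
        rw [Real.dist_eq, Real.dist_eq] at hd
        have h1 : 0 ≤ φ₂ (b' x) - φ₂ (a' x) := sub_nonneg.mpr (hφ₂mono hIHx)
        have h2 : |b' x - a' x| = b' x - a' x := abs_of_nonneg (sub_nonneg.mpr hIHx)
        rw [h2] at hd
        calc φ₂ (b' x) - φ₂ (a' x) ≤ |φ₂ (b' x) - φ₂ (a' x)| := le_abs_self _
        _ ≤ (L:ℝ) * (b' x - a' x) := hd
      have key1 : Δ * (ν₂ Set.univ).toReal * (φ₂ (b' x) - φ₂ (a' x)) ≤ b' x - a' x := by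
        have t1 : Δ * (ν₂ Set.univ).toReal * (φ₂ (b' x) - φ₂ (a' x))
            ≤ Δ * (ν₂ Set.univ).toReal * ((L:ℝ) * (b' x - a' x)) :=
          mul_le_mul_of_nonneg_left hlips (mul_nonneg hΔ.le hν₂R0)
        have t2 : Δ * (L:ℝ) * (ν₂ Set.univ).toReal * (b' x - a' x) ≤ 1 * (b' x - a' x) :=
          mul_le_mul_of_nonneg_right hCFLr (sub_nonneg.mpr hIHx)
        nlinarith [t1, t2]
      have t3 : Δ * (∫ z, φ₂ (a' (x+z)) ∂ν₂) ≤ Δ * ∫ z, φ₂ (b' (x+z)) ∂ν₂ :=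
        mul_le_mul_of_nonneg_left s2 hΔ.le
      have t4 : Δ * Favg t f (j+1) x ≤ Δ * Favg t g (j+1) x :=
        mul_le_mul_of_nonneg_left hFx hΔ.le
      rw [e_a, e_b]
      nlinarith [key1, t3, t4]
    -- combine into the hypothesis of `key`
    have hgood1 : ∀ᵐ x ∂vol, (∀ᵐ z ∂ν₁, |a (x+z)| ≤ M ∧ |b (x+z)| ≤ M) :=
      ae_ae_add ν₁ (hab.and hbb)
    obtain ⟨B₁, hB₁⟩ := (isCompact_Icc (a := -M) (b := M)).exists_bound_of_continuousOn
      hφ₁cont.continuousOn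
    have hH : ∀ᵐ x ∂vol, a x - b x ≤
        Δ * ∫ z, ((φ₁ (a (x+z)) - φ₁ (b (x+z))) - (φ₁ (a x) - φ₁ (b x))) ∂ν₁ := by
      filter_upwards [hEqU, hEqV, hexp, hgood1, hab, hbb] with x h1 h2 h3 hz hax hbx
      have hBb : ∀ s : ℝ, |s| ≤ M → |φ₁ s| ≤ B₁ := by
        intro s hs
        have := hB₁ s (abs_le.mp hs)
        rwa [Real.norm_eq_abs] at this
      have hIa : Integrable (fun z => φ₁ (a (x+z)) - φ₁ (a x)) ν₁ := by
        refine (integrable_const (2*B₁)).mono'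
          (((hφ₁cont.measurable.comp (ham.measurable.comp (measurable_const_add x))).sub
            measurable_const).aestronglyMeasurable) ?_
        filter_upwards [hz] with z hzz
        rw [Real.norm_eq_abs]
        calc |φ₁ (a (x+z)) - φ₁ (a x)| ≤ |φ₁ (a (x+z))| + |φ₁ (a x)| := abs_sub _ _
        _ ≤ 2*B₁ := by linarith [hBb _ hzz.1, hBb _ hax]
      have hIb : Integrable (fun z => φ₁ (b (x+z)) - φ₁ (b x)) ν₁ := by
        refine (integrable_const (2*B₁)).mono'
          (((hφ₁cont.measurable.comp (hbm.measurable.comp (measurable_const_add x))).sub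
            measurable_const).aestronglyMeasurable) ?_
        filter_upwards [hz] with z hzz
        rw [Real.norm_eq_abs]
        calc |φ₁ (b (x+z)) - φ₁ (b x)| ≤ |φ₁ (b (x+z))| + |φ₁ (b x)| := abs_sub _ _
        _ ≤ 2*B₁ := by linarith [hBb _ hzz.2, hBb _ hbx]
      have hcomb : (∫ z, ((φ₁ (a (x+z)) - φ₁ (b (x+z))) - (φ₁ (a x) - φ₁ (b x))) ∂ν₁)
          = (∫ z, (φ₁ (a (x+z)) - φ₁ (a x)) ∂ν₁) - ∫ z, (φ₁ (b (x+z)) - φ₁ (b x)) ∂ν₁ := by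
        rw [← integral_sub hIa hIb]
        refine integral_congr_ae (Filter.Eventually.of_forall (fun z => ?_))
        show (φ₁ (a (x+z)) - φ₁ (b (x+z))) - (φ₁ (a x) - φ₁ (b x))
          = (φ₁ (a (x+z)) - φ₁ (a x)) - (φ₁ (b (x+z)) - φ₁ (b x))
        ring
      rw [hcomb, mul_sub]
      nlinarith [h3]
    -- apply the key lemma
    have hint : Integrable (fun x => a x - b x) vol :=
      (hUj1i.congr haeq).sub (hVj1i.congr hbeq)
    have hkey := key ν₁ φ₁ hφ₁cont hφ₁mono a b ham.measurable hbm.measurable M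
      (le_trans hCu0 (le_max_left _ _)) hab hbb hint Δ hΔ.le hH
    filter_upwards [hkey, haeq, hbeq] with x h1 h2 h3
    rw [h2, h3]; exact h1
end
end

section
/- Under the scheme assumptions, assume in addition that φ_1 is locally Lipschitz, and let (U^j) be a solution of the scheme with data (u_0, f). Then the scheme is conservative: for every j = 0,...,J, ∫_{ℝ^N} U^j(x) dx = ∫_{ℝ^N} u_0(x) dx + ∫_0^{t_j} ∫_{ℝ^N} f(x,τ) dx dτ. -/
open MeasureTheory ENNReal
open scoped ENNReal NNReal

noncomputable section

/-- Composition with a function that is Lipschitz near 0, vanishing at 0, preserves L¹∩L∞. -/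
lemma comp_integrable {N : ℕ} {U : EuclideanSpace ℝ (Fin N) → ℝ} {φ : ℝ → ℝ}
    (hφc : Continuous φ) (hφl : LocallyLipschitz φ) (hφ0 : φ 0 = 0)
    (hU1 : Integrable U volume) (hUinf : MemLp U ∞ volume) :
    Integrable (fun x => φ (U x)) volume := by
  obtain ⟨K, s, hs, hK⟩ := hφl 0
  obtain ⟨ε, hε, hball⟩ := Metric.mem_nhds_iff.mp hs
  set M := (eLpNorm U ∞ volume).toReal with hM
  have hMfin : eLpNorm U ∞ volume ≠ ∞ := hUinf.2.ne
  have hM0 : 0 ≤ M := ENNReal.toReal_nonneg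
  have hbd : ∀ᵐ x ∂(volume : Measure (EuclideanSpace ℝ (Fin N))), |U x| ≤ M := by
    filter_upwards [ae_le_eLpNormEssSup (f := U) (μ := volume)] with x hx
    have h1 : (‖U x‖₊ : ℝ≥0∞) ≤ eLpNorm U ∞ volume := by
      rwa [eLpNorm_exponent_top]
    have := ENNReal.toReal_mono hMfin h1
    rw [hM, eLpNorm_exponent_top]
    simpa [Real.norm_eq_abs] using this
  obtain ⟨C, hC⟩ := (isCompact_Icc (a := -M) (b := M)).exists_bound_of_continuousOn
    hφc.continuousOn
  have h0mem : (0:ℝ) ∈ Set.Icc (-M) M := ⟨neg_nonpos.mpr hM0, hM0⟩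
  have hC0 : 0 ≤ C := le_trans (norm_nonneg _) (hC 0 h0mem)
  set K' : ℝ := (K : ℝ) + C / (ε / 2) with hK'
  have hK'K : (K : ℝ) ≤ K' := le_add_of_nonneg_right (div_nonneg hC0 (by linarith))
  have hK'C : C / (ε / 2) ≤ K' := le_add_of_nonneg_left K.coe_nonneg
  have key : ∀ u : ℝ, |u| ≤ M → |φ u| ≤ K' * |u| := by
    intro u hu
    rcases le_or_gt |u| (ε / 2) with h | h
    · have hus : u ∈ s := hball (by
        simp only [Metric.mem_ball, dist_zero_right, Real.norm_eq_abs]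
        linarith)
      have h0s : (0:ℝ) ∈ s := hball (by simpa using hε)
      have := hK.dist_le_mul u hus 0 h0s
      rw [hφ0, dist_zero_right, dist_zero_right, Real.norm_eq_abs, Real.norm_eq_abs] at this
      calc |φ u| ≤ (K : ℝ) * |u| := this
        _ ≤ K' * |u| := by apply mul_le_mul_of_nonneg_right hK'K (abs_nonneg u)
    · have humem : u ∈ Set.Icc (-M) M := abs_le.mp hu
      have h1 : |φ u| ≤ C := by simpa [Real.norm_eq_abs] using hC u humem
      have h2 : C = C / (ε / 2) * (ε / 2) := by
        field_simp
      calc |φ u| ≤ C := h1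
        _ = C / (ε / 2) * (ε / 2) := h2
        _ ≤ C / (ε / 2) * |u| := by
            apply mul_le_mul_of_nonneg_left (le_of_lt h) (div_nonneg hC0 (by linarith))
        _ ≤ K' * |u| := mul_le_mul_of_nonneg_right hK'C (abs_nonneg u)
  have hmeas : AEStronglyMeasurable (fun x => φ (U x)) volume :=
    hφc.comp_aestronglyMeasurable hU1.aestronglyMeasurable
  refine Integrable.mono' ((hU1.abs).const_mul K') hmeas ?_
  filter_upwards [hbd] with x hx
  simpa [Real.norm_eq_abs] using key (U x) hx

/-- `Lnu` only depends on the a.e. class of `ψ` (a.e. in `x`). -/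
lemma Lnu_congr_ae {N : ℕ} (ν : Measure (EuclideanSpace ℝ (Fin N))) [IsFiniteMeasure ν]
    {ψ ψ' : EuclideanSpace ℝ (Fin N) → ℝ} (h : ψ =ᵐ[volume] ψ') :
    (fun x => Lnu ν ψ x) =ᵐ[volume] fun x => Lnu ν ψ' x := by
  have hnull : (volume : Measure (EuclideanSpace ℝ (Fin N))) {y | ψ y ≠ ψ' y} = 0 := h
  obtain ⟨E, hEsub, hEm, hE0⟩ := exists_measurable_superset_of_null hnull
  -- the set of bad fibers is null
  have hfib : ∀ᵐ x ∂(volume : Measure (EuclideanSpace ℝ (Fin N))),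
      ν {z | x + z ∈ E} = 0 := by
    have hmeasset : MeasurableSet {p : EuclideanSpace ℝ (Fin N) × EuclideanSpace ℝ (Fin N) |
        p.1 + p.2 ∈ E} := (measurable_fst.add measurable_snd) hEm
    have hmeasfun : Measurable fun x => ν (Prod.mk x ⁻¹' {p :
        EuclideanSpace ℝ (Fin N) × EuclideanSpace ℝ (Fin N) | p.1 + p.2 ∈ E}) :=
      measurable_measure_prodMk_left hmeasset
    have hzero : ∫⁻ x, ν {z | x + z ∈ E} ∂(volume : Measure (EuclideanSpace ℝ (Fin N))) = 0 := by
      have h1 : ∀ x, ν {z | x + z ∈ E} = ∫⁻ z, E.indicator (fun _ => (1:ℝ≥0∞)) (x + z) ∂ν := by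
        intro x
        rw [← lintegral_indicator_one (by
          exact (measurable_const_add x) hEm : MeasurableSet {z | x + z ∈ E})]
        congr 1
      simp only [h1]
      have hg : Measurable (fun p : EuclideanSpace ℝ (Fin N) × EuclideanSpace ℝ (Fin N) =>
          E.indicator (fun _ => (1:ℝ≥0∞)) (p.1 + p.2)) :=
        (measurable_one.indicator hEm).comp (measurable_fst.add measurable_snd)
      rw [← lintegral_prod (fun p => E.indicator (fun _ => (1:ℝ≥0∞)) (p.1 + p.2))
        hg.aemeasurable]
      rw [lintegral_prod_symm (fun p => E.indicator (fun _ => (1:ℝ≥0∞)) (p.1 + p.2))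
        hg.aemeasurable]
      have h2 : ∀ z : EuclideanSpace ℝ (Fin N),
          ∫⁻ x, E.indicator (fun _ => (1:ℝ≥0∞)) (x + z) ∂volume = 0 := by
        intro z
        rw [lintegral_add_right_eq_self (fun x => E.indicator (fun _ => (1:ℝ≥0∞)) x) z]
        have hone : ∫⁻ x, E.indicator (fun _ => (1:ℝ≥0∞)) x
            ∂(volume : Measure (EuclideanSpace ℝ (Fin N))) = volume E :=
          lintegral_indicator_one hEm
        rw [hone]
        exact hE0
      simp [h2]
    have := (lintegral_eq_zero_iff (by exact hmeasfun)).mp hzero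
    filter_upwards [this] with x hx
    exact hx
  have hx0 : ∀ᵐ x ∂(volume : Measure (EuclideanSpace ℝ (Fin N))), ψ x = ψ' x := h
  filter_upwards [hfib, hx0] with x hx hψx
  unfold Lnu
  apply integral_congr_ae
  have : ∀ᵐ z ∂ν, x + z ∉ E := by
    rw [ae_iff]
    simpa using hx
  filter_upwards [this] with z hz
  have : ψ (x + z) = ψ' (x + z) := by
    by_contra hcon
    exact hz (hEsub hcon)
  rw [this, hψx]

/-- Key lemma: for integrable `ψ`, `x ↦ Lnu ν ψ x` is integrable with integral zero. -/
lemma Lnu_key {N : ℕ} (ν : Measure (EuclideanSpace ℝ (Fin N))) [IsFiniteMeasure ν]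
    {ψ : EuclideanSpace ℝ (Fin N) → ℝ} (hψ : Integrable ψ volume) :
    Integrable (fun x => Lnu ν ψ x) volume ∧ ∫ x, Lnu ν ψ x = 0 := by
  classical
  set ψ' := hψ.aestronglyMeasurable.mk ψ with hψ'def
  have hm : StronglyMeasurable ψ' := hψ.aestronglyMeasurable.stronglyMeasurable_mk
  have heq : ψ =ᵐ[volume] ψ' := hψ.aestronglyMeasurable.ae_eq_mk
  have hψ' : Integrable ψ' volume := hψ.congr heq
  have hmm : Measurable ψ' := hm.measurable
  set F : EuclideanSpace ℝ (Fin N) × EuclideanSpace ℝ (Fin N) → ℝ :=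
    fun p => ψ' (p.1 + p.2) - ψ' p.1 with hF
  have hFm : Measurable F := (hmm.comp (measurable_fst.add measurable_snd)).sub
    (hmm.comp measurable_fst)
  have hFi : Integrable F (volume.prod ν) := by
    refine ⟨hFm.aestronglyMeasurable, ?_⟩
    rw [hasFiniteIntegral_def]
    simp only [enorm_eq_nnnorm]
    set I := ∫⁻ x, (‖ψ' x‖₊ : ℝ≥0∞) ∂(volume : Measure (EuclideanSpace ℝ (Fin N))) with hI
    have hIfin : I < ∞ := by
      rw [hI]
      exact hψ'.2
    have hswap : ∫⁻ p, (‖F p‖₊ : ℝ≥0∞) ∂(volume.prod ν)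
        = ∫⁻ z, ∫⁻ x, (‖F (x, z)‖₊ : ℝ≥0∞) ∂volume ∂ν :=
      lintegral_prod_symm _ (hFm.nnnorm.coe_nnreal_ennreal).aemeasurable
    rw [hswap]
    have hinner : ∀ z, ∫⁻ x, (‖F (x, z)‖₊ : ℝ≥0∞) ∂(volume : Measure (EuclideanSpace ℝ (Fin N)))
        ≤ 2 * I := by
      intro z
      have hb : ∀ x : EuclideanSpace ℝ (Fin N), (‖F (x, z)‖₊ : ℝ≥0∞)
          ≤ (‖ψ' (x + z)‖₊ : ℝ≥0∞) + (‖ψ' x‖₊ : ℝ≥0∞) := by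
        intro x
        simp only [hF]
        exact_mod_cast nnnorm_sub_le _ _
      calc ∫⁻ x, (‖F (x, z)‖₊ : ℝ≥0∞) ∂volume
          ≤ ∫⁻ x, ((‖ψ' (x + z)‖₊ : ℝ≥0∞) + (‖ψ' x‖₊ : ℝ≥0∞)) ∂volume := lintegral_mono hb
        _ = (∫⁻ x, (‖ψ' (x + z)‖₊ : ℝ≥0∞) ∂volume) + I := by
            rw [lintegral_add_left]
            exact ((hmm.comp (measurable_add_const z)).nnnorm.coe_nnreal_ennreal)
        _ = I + I := by
            rw [lintegral_add_right_eq_self (fun x => (‖ψ' x‖₊ : ℝ≥0∞)) z]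
        _ = 2 * I := by ring
    calc ∫⁻ z, ∫⁻ x, (‖F (x, z)‖₊ : ℝ≥0∞) ∂volume ∂ν
        ≤ ∫⁻ _, 2 * I ∂ν := lintegral_mono hinner
      _ = 2 * I * ν Set.univ := by rw [lintegral_const]
      _ < ∞ := by
          apply ENNReal.mul_lt_top
          · exact ENNReal.mul_lt_top (by simp) hIfin
          · exact measure_lt_top ν _
  have hLnu' : (fun x => Lnu ν ψ' x) = fun x => ∫ z, F (x, z) ∂ν := rfl
  have hInt' : Integrable (fun x => Lnu ν ψ' x) volume := by
    rw [hLnu']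
    exact hFi.integral_prod_left
  have hzero' : ∫ x, Lnu ν ψ' x = 0 := by
    rw [hLnu']
    have hswap2 : ∫ x, ∫ z, F (x, z) ∂ν ∂(volume : Measure (EuclideanSpace ℝ (Fin N)))
        = ∫ z, ∫ x, F (x, z) ∂volume ∂ν :=
      integral_integral_swap (f := fun x z => ψ' (x + z) - ψ' x) hFi
    rw [hswap2]
    have hin : ∀ z : EuclideanSpace ℝ (Fin N), ∫ x, F (x, z) ∂(volume :
        Measure (EuclideanSpace ℝ (Fin N))) = 0 := by
      intro z
      have h1 : Integrable (fun x => ψ' (x + z)) (volume :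
          Measure (EuclideanSpace ℝ (Fin N))) := hψ'.comp_add_right z
      simp only [hF]
      rw [integral_sub h1 hψ', integral_add_right_eq_self ψ' z, sub_self]
    simp [hin]
  have heqL := Lnu_congr_ae ν heq
  constructor
  · exact hInt'.congr heqL.symm
  · rw [integral_congr_ae heqL]
    exact hzero'
theorem stmt14 {N : ℕ} (hN : 1 ≤ N)
    (T : ℝ) (hT : 0 < T) (J : ℕ) (hJ : 1 ≤ J)
    (t : ℕ → ℝ) (ht0 : t 0 = 0) (htJ : t J = T)
    (htmono : ∀ j < J, t j < t (j + 1))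
    (u₀ : EuclideanSpace ℝ (Fin N) → ℝ)
    (hu₀1 : Integrable u₀ volume) (hu₀inf : MemLp u₀ ∞ volume)
    (f : EuclideanSpace ℝ (Fin N) → ℝ → ℝ)
    (hfmeas : Measurable (Function.uncurry f))
    (hfint : ∫⁻ τ in Set.Ioc 0 T,
        (eLpNorm (fun x => f x τ) 1 volume + eLpNorm (fun x => f x τ) ∞ volume) < ∞)
    (ν₁ ν₂ : Measure (EuclideanSpace ℝ (Fin N)))
    [IsFiniteMeasure ν₁] [IsFiniteMeasure ν₂]
    (hsym₁ : ν₁.map (fun z => -z) = ν₁) (hsym₂ : ν₂.map (fun z => -z) = ν₂)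
    (φ₁ φ₂ : ℝ → ℝ)
    (hφ₁cont : Continuous φ₁) (hφ₁mono : Monotone φ₁) (hφ₁0 : φ₁ 0 = 0)
    (hφ₁loclip : LocallyLipschitz φ₁)
    (L : ℝ≥0) (hφ₂lip : LipschitzWith L φ₂) (hφ₂mono : Monotone φ₂) (hφ₂0 : φ₂ 0 = 0)
    (hCFL : ∀ j, 1 ≤ j → j ≤ J →
      ENNReal.ofReal (t j - t (j - 1)) * (L : ℝ≥0∞) * ν₂ Set.univ ≤ 1)
    (U : ℕ → EuclideanSpace ℝ (Fin N) → ℝ)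
    (hU : IsSchemeSol ν₁ ν₂ φ₁ φ₂ t J u₀ f U) :
    ∀ j ≤ J,
      ∫ x, U j x = (∫ x, u₀ x) + ∫ τ in Set.Ioc 0 (t j), ∫ x, f x τ := by
  obtain ⟨hUreg, hU0, hUstep⟩ := hU
  have hle : ∀ j, j ≤ J → ∀ i, i ≤ j → t i ≤ t j := by
    intro j
    induction j with
    | zero => intro _ i hi; rw [Nat.le_zero.mp hi]
    | succ n ih =>
      intro hj i hi
      rcases Nat.lt_or_ge i (n+1) with h | h
      · have h1 : i ≤ n := Nat.lt_succ_iff.mp h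
        have h2 : t i ≤ t n := ih (le_trans (Nat.le_succ n) hj) i h1
        have h3 : t n < t (n+1) := htmono n hj
        linarith
      · rw [le_antisymm hi h]
  have hfbig : Integrable (fun p : EuclideanSpace ℝ (Fin N) × ℝ => f p.1 p.2)
      (volume.prod (volume.restrict (Set.Ioc 0 T))) := by
    refine ⟨hfmeas.aestronglyMeasurable, ?_⟩
    rw [hasFiniteIntegral_def]
    simp only [enorm_eq_nnnorm]
    have hswap := lintegral_prod_symm (μ := (volume : Measure (EuclideanSpace ℝ (Fin N))))
      (ν := volume.restrict (Set.Ioc 0 T))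
      (fun p : EuclideanSpace ℝ (Fin N) × ℝ => (‖f p.1 p.2‖₊ : ℝ≥0∞))
      (hfmeas.nnnorm.coe_nnreal_ennreal).aemeasurable
    rw [hswap]
    calc ∫⁻ τ in Set.Ioc 0 T, ∫⁻ x, (‖f x τ‖₊ : ℝ≥0∞) ∂volume
        = ∫⁻ τ in Set.Ioc 0 T, eLpNorm (fun x => f x τ) 1 volume := by
          apply lintegral_congr
          intro τ
          rw [eLpNorm_one_eq_lintegral_enorm]
          rfl
      _ ≤ ∫⁻ τ in Set.Ioc 0 T,
            (eLpNorm (fun x => f x τ) 1 volume + eLpNorm (fun x => f x τ) ∞ volume) :=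
          lintegral_mono fun τ => le_self_add
      _ < ∞ := hfint
  have htau : Integrable (fun τ => ∫ x, f x τ) (volume.restrict (Set.Ioc 0 T)) :=
    (hfbig.swap).integral_prod_left
  have hkey : ∀ a b : ℝ, Set.Ioc a b ⊆ Set.Ioc 0 T →
      Integrable (fun p : EuclideanSpace ℝ (Fin N) × ℝ => f p.1 p.2)
        (volume.prod (volume.restrict (Set.Ioc a b))) := by
    intro a b hsub
    have e : ∀ s : Set ℝ, (volume : Measure (EuclideanSpace ℝ (Fin N))).prod (volume.restrict s)
        = ((volume : Measure (EuclideanSpace ℝ (Fin N))).prod volume).restrict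
          (Set.univ ×ˢ s) := by
      intro s
      rw [← Measure.prod_restrict, Measure.restrict_univ]
    have h1 := hfbig
    rw [e] at h1 ⊢
    exact IntegrableOn.mono_set h1 (Set.prod_mono (subset_refl _) hsub)
  have hstep : ∀ j, 1 ≤ j → j ≤ J →
      ∫ x, U j x = (∫ x, U (j-1) x) + ∫ τ in Set.Ioc (t (j-1)) (t j), ∫ x, f x τ := by
    intro j hj1 hjJ
    have hj1J : j - 1 ≤ J := le_trans (Nat.sub_le j 1) hjJ
    have hΔpos : 0 < t j - t (j-1) := by
      have h1 : j - 1 < J :=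
        lt_of_lt_of_le (Nat.sub_lt (Nat.lt_of_lt_of_le Nat.zero_lt_one hj1) Nat.one_pos) hjJ
      have h2 := htmono (j-1) h1
      rw [Nat.sub_add_cancel hj1] at h2
      linarith
    have hΔne : t j - t (j-1) ≠ 0 := ne_of_gt hΔpos
    have hsub : Set.Ioc (t (j-1)) (t j) ⊆ Set.Ioc 0 T := by
      intro τ hτ
      refine ⟨?_, ?_⟩
      · have h0 : t 0 ≤ t (j-1) := hle (j-1) hj1J 0 (Nat.zero_le _)
        rw [ht0] at h0
        exact lt_of_le_of_lt h0 hτ.1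
      · have hT' : t j ≤ t J := hle J le_rfl j hjJ
        rw [htJ] at hT'
        exact le_trans hτ.2 hT'
    obtain ⟨hUj1, hUjinf⟩ := hUreg j hjJ
    obtain ⟨hUm1, hUminf⟩ := hUreg (j-1) hj1J
    have hψ₁ : Integrable (fun y => φ₁ (U j y)) volume :=
      comp_integrable hφ₁cont hφ₁loclip hφ₁0 hUj1 hUjinf
    have hψ₂ : Integrable (fun y => φ₂ (U (j-1) y)) volume :=
      comp_integrable hφ₂lip.continuous hφ₂lip.locallyLipschitz hφ₂0 hUm1 hUminf
    obtain ⟨hL1i, hL1z⟩ := Lnu_key ν₁ hψ₁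
    obtain ⟨hL2i, hL2z⟩ := Lnu_key ν₂ hψ₂
    have hfj := hkey (t (j-1)) (t j) hsub
    have hg : Integrable (fun x => ∫ τ in Set.Ioc (t (j-1)) (t j), f x τ) volume :=
      hfj.integral_prod_left
    have hFavg : Integrable (Favg t f j) volume := by
      have h1 := hg.const_mul ((t j - t (j-1))⁻¹)
      exact h1
    have heq := hUstep j hj1 hjJ
    have h1 : ∫ x, U j x = ∫ x, (U (j-1) x + (t j - t (j-1)) *
        (Lnu ν₁ (fun y => φ₁ (U j y)) x + Lnu ν₂ (fun y => φ₂ (U (j-1) y)) x +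
          Favg t f j x)) := integral_congr_ae heq
    have hsumInt : Integrable (fun x => Lnu ν₁ (fun y => φ₁ (U j y)) x
        + Lnu ν₂ (fun y => φ₂ (U (j-1) y)) x + Favg t f j x) volume :=
      (hL1i.add hL2i).add hFavg
    have e1 : ∫ a, (Lnu ν₁ (fun y => φ₁ (U j y)) a + Lnu ν₂ (fun y => φ₂ (U (j-1) y)) a
        + Favg t f j a) = (∫ a, (Lnu ν₁ (fun y => φ₁ (U j y)) a
        + Lnu ν₂ (fun y => φ₂ (U (j-1) y)) a)) + ∫ a, Favg t f j a :=
      integral_add (hL1i.add hL2i) hFavg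
    have e2 : ∫ a, (Lnu ν₁ (fun y => φ₁ (U j y)) a + Lnu ν₂ (fun y => φ₂ (U (j-1) y)) a)
        = (∫ a, Lnu ν₁ (fun y => φ₁ (U j y)) a) + ∫ a, Lnu ν₂ (fun y => φ₂ (U (j-1) y)) a :=
      integral_add hL1i hL2i
    rw [h1, integral_add hUm1 (hsumInt.const_mul _), integral_const_mul, e1, e2, hL1z, hL2z]
    have hswap2 : ∫ x, ∫ τ in Set.Ioc (t (j-1)) (t j), f x τ
        = ∫ τ in Set.Ioc (t (j-1)) (t j), ∫ x, f x τ :=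
      integral_integral_swap (f := fun (x : EuclideanSpace ℝ (Fin N)) (τ : ℝ) => f x τ) hfj
    have hFavgval : ∫ x, Favg t f j x = (t j - t (j-1))⁻¹ *
        ∫ τ in Set.Ioc (t (j-1)) (t j), ∫ x, f x τ := by
      simp only [Favg]
      rw [integral_const_mul, hswap2]
    rw [hFavgval]
    field_simp
    simp
  intro j
  induction j with
  | zero =>
    intro _
    rw [ht0]
    simp only [Set.Ioc_self, Measure.restrict_empty, integral_zero_measure, add_zero]
    exact integral_congr_ae hU0
  | succ n ih =>
    intro hn
    have hnJ : n ≤ J := le_trans (Nat.le_succ n) hn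
    have hnltJ : n < J := hn
    have hs := hstep (n+1) (Nat.le_add_left 1 n) hn
    simp only [Nat.add_sub_cancel] at hs
    have h0n : (0:ℝ) ≤ t n := by
      have := hle n hnJ 0 (Nat.zero_le _)
      rw [ht0] at this
      exact this
    have hn1 : t n ≤ t (n+1) := le_of_lt (htmono n hnltJ)
    have hTn : t (n+1) ≤ T := by
      have := hle J le_rfl (n+1) hn
      rwa [htJ] at this
    rw [hs, ih hnJ, add_assoc]
    congr 1
    rw [← setIntegral_union (Set.Ioc_disjoint_Ioc_of_le le_rfl) measurableSet_Ioc
      (IntegrableOn.mono_set htau (Set.Ioc_subset_Ioc_right (le_trans hn1 hTn)))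
      (IntegrableOn.mono_set htau (Set.Ioc_subset_Ioc h0n hTn)),
      Set.Ioc_union_Ioc_eq_Ioc h0n hn1]
end
end
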